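/- Let Ξ_{≤α} = {x ∈ K : limsup_{r→0} log μ(B(x,r))/log r ≤ α}. If the open set condition holds and α ≤ α(0) (the value -β'(0)), then the packing dimension of Ξ_{≤α} is at most β*(α) = inf_q (αq + β(q)). -/

import Mathlib

open Metric MeasureTheory Topology Filter
open scoped NNReal ENNReal

/-- The `δ`-pre-packing content `P^s_δ`-style supremum: the supremum of `∑ diam(B_i)^s`
over countable disjoint families of closed balls of diameter at most `δ` centred in `A`,
followed by letting `δ → 0`.  This is the pre-packing measure `P^s(A)`. -/
noncomputable def prePackingMeasure {X : Type*} [MetricSpace X] (s : ℝ) (A : Set X) : ℝ≥0∞ :=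
  ⨅ (δ : ℝ) (_ : 0 < δ),
    ⨆ (c : ℕ → X) (ρ : ℕ → ℝ) (_ : ∀ n, c n ∈ A) (_ : ∀ n, 0 < ρ n ∧ 2 * ρ n ≤ δ)
      (_ : Pairwise fun m n => Disjoint (closedBall (c m) (ρ m)) (closedBall (c n) (ρ n))),
      ∑' n, ENNReal.ofReal (2 * ρ n) ^ s

/-- The packing measure `𝒫^s(A) = inf { ∑ᵢ P^s(Aᵢ) : A ⊆ ⋃ᵢ Aᵢ }`. -/
noncomputable def packingMeasure {X : Type*} [MetricSpace X] (s : ℝ) (A : Set X) : ℝ≥0∞ :=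
  ⨅ (f : ℕ → Set X) (_ : A ⊆ ⋃ n, f n), ∑' n, prePackingMeasure s (f n)

/-- The packing dimension `dim_P A = inf { s ≥ 0 : 𝒫^s(A) = 0 }`. -/
noncomputable def dimP {X : Type*} [MetricSpace X] (A : Set X) : ℝ :=
  sInf {s : ℝ | 0 ≤ s ∧ packingMeasure s A = 0}

namespace MFAux

variable {d N : ℕ}

/-- iterated map along a word -/
def wmap (S : Fin N → EuclideanSpace ℝ (Fin d) → EuclideanSpace ℝ (Fin d)) :
    List (Fin N) → EuclideanSpace ℝ (Fin d) → EuclideanSpace ℝ (Fin d)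
  | [] => id
  | i :: w => S i ∘ wmap S w

/-- product of weights along a word -/
def wprod (r : Fin N → ℝ) (w : List (Fin N)) : ℝ := (w.map r).prod

variable {S : Fin N → EuclideanSpace ℝ (Fin d) → EuclideanSpace ℝ (Fin d)} {r p : Fin N → ℝ}

@[simp] lemma wprod_nil (r : Fin N → ℝ) : wprod r [] = 1 := rfl

@[simp] lemma wprod_cons (r : Fin N → ℝ) (i : Fin N) (w : List (Fin N)) :
    wprod r (i :: w) = r i * wprod r w := by simp [wprod]

lemma wprod_append (r : Fin N → ℝ) (w v : List (Fin N)) :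
    wprod r (w ++ v) = wprod r w * wprod r v := by simp [wprod]

@[simp] lemma wmap_nil (S : Fin N → EuclideanSpace ℝ (Fin d) → EuclideanSpace ℝ (Fin d)) :
    wmap S [] = id := rfl

@[simp] lemma wmap_cons (i : Fin N) (w : List (Fin N)) :
    wmap S (i :: w) = S i ∘ wmap S w := rfl

lemma wmap_append (w v : List (Fin N)) :
    wmap S (w ++ v) = wmap S w ∘ wmap S v := by
  induction w with
  | nil => rfl
  | cons i w ih => simp [wmap, ih]; rfl

lemma wprod_pos (hr : ∀ i, 0 < r i) (w : List (Fin N)) : 0 < wprod r w := by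
  induction w with
  | nil => norm_num
  | cons i w ih => simpa [wprod_cons] using mul_pos (hr i) ih

lemma wprod_le_one (hr0 : ∀ i, 0 < r i) (hr1 : ∀ i, r i ≤ 1) (w : List (Fin N)) :
    wprod r w ≤ 1 := by
  induction w with
  | nil => norm_num
  | cons i w ih =>
    have := wprod_pos hr0 w
    rw [wprod_cons]
    calc r i * wprod r w ≤ 1 * 1 :=
          mul_le_mul (hr1 i) ih (le_of_lt this) zero_le_one
      _ = 1 := one_mul 1

lemma wprod_le_pow {rmax : ℝ} (hr0 : ∀ i, 0 < r i) (hrm : ∀ i, r i ≤ rmax) (hm0 : 0 ≤ rmax)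
    (w : List (Fin N)) : wprod r w ≤ rmax ^ w.length := by
  induction w with
  | nil => norm_num
  | cons i w ih =>
    have h1 := wprod_pos hr0 w
    simp only [wprod_cons, List.length_cons, pow_succ]
    rw [mul_comm (rmax ^ w.length) rmax]
    exact mul_le_mul (hrm i) ih (le_of_lt h1) hm0

lemma dist_wmap (hS : ∀ i x y, dist (S i x) (S i y) = r i * dist x y)
    (w : List (Fin N)) (x y : EuclideanSpace ℝ (Fin d)) :
    dist (wmap S w x) (wmap S w y) = wprod r w * dist x y := by
  induction w with
  | nil => simp
  | cons i w ih => simp [wmap, hS, ih, mul_assoc]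

lemma continuous_wmap (hS : ∀ i x y, dist (S i x) (S i y) = r i * dist x y)
    (hr : ∀ i, 0 < r i) (w : List (Fin N)) : Continuous (wmap S w) := by
  induction w with
  | nil => exact continuous_id
  | cons i w ih =>
    have : Continuous (S i) := by
      refine (LipschitzWith.of_dist_le_mul (K := (r i).toNNReal) (f := S i) ?_).continuous
      intro x y
      rw [hS i x y, Real.coe_toNNReal _ (le_of_lt (hr i))]
    exact this.comp ih

lemma wmap_mem {K : Set (EuclideanSpace ℝ (Fin d))} (hKs : ∀ i, S i '' K ⊆ K)
    (w : List (Fin N)) {x : EuclideanSpace ℝ (Fin d)} (hx : x ∈ K) : wmap S w x ∈ K := by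
  induction w with
  | nil => exact hx
  | cons i w ih => exact hKs i ⟨wmap S w x, ih, rfl⟩

lemma wprod_rpow (hr : ∀ i, 0 < r i) (t : ℝ) (w : List (Fin N)) :
    wprod (fun i => r i ^ t) w = wprod r w ^ t := by
  induction w with
  | nil => simp
  | cons i w ih =>
    rw [wprod_cons, wprod_cons, ih, ← Real.mul_rpow (le_of_lt (hr i)) (le_of_lt (wprod_pos hr w))]

lemma wprod_mul (a b : Fin N → ℝ) (w : List (Fin N)) :
    wprod (fun i => a i * b i) w = wprod a w * wprod b w := by
  induction w with
  | nil => simp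
  | cons i w ih => rw [wprod_cons, wprod_cons, wprod_cons, ih]; ring


section Stage
open scoped Classical

variable {ρ' : ℝ} {K : Set (EuclideanSpace ℝ (Fin d))} {μ : Measure (EuclideanSpace ℝ (Fin d))}

/-- the `stage` construction: `(stage r ρ' n).1` collects stopped words
(`wprod r · ≤ ρ'` for the first time), `(stage r ρ' n).2` the still-active words of length `n`. -/
noncomputable def stage (r : Fin N → ℝ) (ρ' : ℝ) : ℕ → Finset (List (Fin N)) × Finset (List (Fin N))
  | 0 => (∅, {[]})
  | n+1 =>
    ((stage r ρ' n).1 ∪ ((((stage r ρ' n).2 ×ˢ (Finset.univ : Finset (Fin N))).image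
        (fun wi => wi.1 ++ [wi.2])).filter (fun w => wprod r w ≤ ρ')),
     (((stage r ρ' n).2 ×ˢ (Finset.univ : Finset (Fin N))).image
        (fun wi => wi.1 ++ [wi.2])).filter (fun w => ¬ wprod r w ≤ ρ'))

lemma concat_inj {v1 v2 : List (Fin N)} {i1 i2 : Fin N} (h : v1 ++ [i1] = v2 ++ [i2])
    (hl : v1.length = v2.length) : v1 = v2 ∧ i1 = i2 := by
  have := List.append_inj h hl
  exact ⟨this.1, by simpa using this.2⟩

lemma mem_G_succ {n : ℕ} {w : List (Fin N)} :
    w ∈ (stage r ρ' (n+1)).1 ↔ w ∈ (stage r ρ' n).1 ∨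
      (∃ v i, v ∈ (stage r ρ' n).2 ∧ w = v ++ [i] ∧ wprod r w ≤ ρ') := by
  simp only [stage, Finset.mem_union, Finset.mem_filter, Finset.mem_image, Finset.mem_product]
  constructor
  · rintro (h | ⟨⟨⟨v, i⟩, ⟨hv, _⟩, hvi⟩, hle⟩)
    · exact Or.inl h
    · exact Or.inr ⟨v, i, hv, hvi.symm, hle⟩
  · rintro (h | ⟨v, i, hv, hw, hle⟩)
    · exact Or.inl h
    · exact Or.inr ⟨⟨⟨v, i⟩, ⟨hv, Finset.mem_univ i⟩, hw.symm⟩, hle⟩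

lemma mem_A_succ {n : ℕ} {w : List (Fin N)} :
    w ∈ (stage r ρ' (n+1)).2 ↔
      (∃ v i, v ∈ (stage r ρ' n).2 ∧ w = v ++ [i] ∧ ¬ wprod r w ≤ ρ') := by
  simp only [stage, Finset.mem_filter, Finset.mem_image, Finset.mem_product]
  constructor
  · rintro ⟨⟨⟨v, i⟩, ⟨hv, _⟩, hvi⟩, hle⟩
    exact ⟨v, i, hv, hvi.symm, hle⟩
  · rintro ⟨v, i, hv, hw, hle⟩
    exact ⟨⟨⟨v, i⟩, ⟨hv, Finset.mem_univ i⟩, hw.symm⟩, hle⟩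

lemma len_A : ∀ n, ∀ w ∈ (stage r ρ' n).2, w.length = n := by
  intro n
  induction n with
  | zero => intro w hw; simp [stage] at hw; simp [hw]
  | succ n ih =>
    intro w hw
    obtain ⟨v, i, hv, hw, _⟩ := mem_A_succ.mp hw
    subst hw; simp [ih v hv]

lemma len_G : ∀ n, ∀ w ∈ (stage r ρ' n).1, w.length ≤ n := by
  intro n
  induction n with
  | zero => intro w hw; simp [stage] at hw
  | succ n ih =>
    intro w hw
    rcases mem_G_succ.mp hw with h | ⟨v, i, hv, hw, _⟩
    · exact (ih w h).trans (Nat.le_succ n)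
    · subst hw; simp [len_A n v hv]

lemma A_prefix_big (hρ : ρ' < 1) :
    ∀ n, ∀ w ∈ (stage r ρ' n).2, ∀ u, u <+: w → ρ' < wprod r u := by
  intro n
  induction n with
  | zero =>
    intro w hw u hu
    simp [stage] at hw
    subst hw
    rw [List.prefix_nil.mp hu]
    simpa using hρ
  | succ n ih =>
    intro w hw u hu
    obtain ⟨v, i, hv, hw, hbig⟩ := mem_A_succ.mp hw
    subst hw
    rcases List.prefix_concat_iff.mp hu with h | h
    · subst h; exact lt_of_not_ge hbig
    · exact ih v hv u h

lemma G_spec (hρ : ρ' < 1) :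
    ∀ n, ∀ w ∈ (stage r ρ' n).1,
      wprod r w ≤ ρ' ∧ (∀ u, u <+: w → u ≠ w → ρ' < wprod r u) ∧
        ∃ v i, w = v ++ [i] ∧ ρ' < wprod r v := by
  intro n
  induction n with
  | zero => intro w hw; simp [stage] at hw
  | succ n ih =>
    intro w hw
    rcases mem_G_succ.mp hw with h | ⟨v, i, hv, hw, hle⟩
    · exact ih w h
    · subst hw
      refine ⟨hle, ?_, v, i, rfl, A_prefix_big hρ n v hv v (List.prefix_refl v)⟩
      intro u hu hne
      rcases List.prefix_concat_iff.mp hu with h | h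
      · exact absurd h hne
      · exact A_prefix_big hρ n v hv u h

lemma A_empty {rmax : ℝ} (hρ : ρ' < 1) (hr0 : ∀ i, 0 < r i) (hrm : ∀ i, r i ≤ rmax)
    (hm0 : 0 ≤ rmax) (n : ℕ) (hn : rmax ^ n ≤ ρ') : (stage r ρ' n).2 = ∅ := by
  rw [Finset.eq_empty_iff_forall_notMem]
  intro w hw
  have h1 := A_prefix_big hρ n w hw w (List.prefix_refl w)
  have h2 : wprod r w ≤ rmax ^ n := by
    rw [← len_A (r := r) (ρ' := ρ') n w hw]
    exact wprod_le_pow hr0 hrm hm0 w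
  linarith

lemma stage_cover (hK : K = ⋃ i, S i '' K) :
    ∀ n, ∀ x ∈ K, (∃ w ∈ (stage r ρ' n).1, x ∈ wmap S w '' K) ∨
      (∃ w ∈ (stage r ρ' n).2, x ∈ wmap S w '' K) := by
  intro n
  induction n with
  | zero =>
    intro x hx
    exact Or.inr ⟨[], by simp [stage], x, hx, rfl⟩
  | succ n ih =>
    intro x hx
    rcases ih x hx with ⟨w, hw, hmem⟩ | ⟨w, hw, y, hy, hxy⟩
    · exact Or.inl ⟨w, mem_G_succ.mpr (Or.inl hw), hmem⟩
    · have : y ∈ ⋃ i, S i '' K := hK ▸ hy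
      obtain ⟨i, z, hz, hyz⟩ := by simpa using this
      have hx' : x ∈ wmap S (w ++ [i]) '' K := by
        refine ⟨z, hz, ?_⟩
        rw [wmap_append]
        simp only [Function.comp_apply, wmap_cons, wmap_nil, id_eq, hyz, hxy]
      by_cases hc : wprod r (w ++ [i]) ≤ ρ'
      · exact Or.inl ⟨w ++ [i], mem_G_succ.mpr (Or.inr ⟨w, i, hw, rfl, hc⟩), hx'⟩
      · exact Or.inr ⟨w ++ [i], mem_A_succ.mpr ⟨w, i, hw, rfl, hc⟩, hx'⟩

lemma stage_measure (hp0 : ∀ i, 0 < p i)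
    (hμ' : ∀ B, MeasurableSet B → μ B = ∑ i, ENNReal.ofReal (p i) * μ (S i ⁻¹' B))
    (hS : ∀ i x y, dist (S i x) (S i y) = r i * dist x y) (hr0 : ∀ i, 0 < r i) :
    ∀ n, ∀ A : Set (EuclideanSpace ℝ (Fin d)), MeasurableSet A →
      μ A = ∑ w ∈ (stage r ρ' n).1, ENNReal.ofReal (wprod p w) * μ (wmap S w ⁻¹' A)
        + ∑ w ∈ (stage r ρ' n).2, ENNReal.ofReal (wprod p w) * μ (wmap S w ⁻¹' A) := by
  intro n
  induction n with
  | zero =>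
    intro A hA
    simp [stage]
  | succ n ih =>
    intro A hA
    have hwm : ∀ w : List (Fin N), MeasurableSet (wmap S w ⁻¹' A) :=
      fun w => (continuous_wmap hS hr0 w).measurable hA
    have expand : ∀ w : List (Fin N),
        μ (wmap S w ⁻¹' A) = ∑ i, ENNReal.ofReal (p i) * μ (wmap S (w ++ [i]) ⁻¹' A) := by
      intro w
      rw [hμ' _ (hwm w)]
      refine Finset.sum_congr rfl fun i _ => ?_
      have hcomp : wmap S (w ++ [i]) = wmap S w ∘ S i := by
        rw [wmap_append]; simp only [wmap_cons, wmap_nil, Function.comp_id]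
      rw [hcomp, Set.preimage_comp]
    have hinj : ∀ x ∈ (stage r ρ' n).2 ×ˢ (Finset.univ : Finset (Fin N)),
        ∀ y ∈ (stage r ρ' n).2 ×ˢ (Finset.univ : Finset (Fin N)),
        x.1 ++ [x.2] = y.1 ++ [y.2] → x = y := by
      intro x hx y hy hxy
      rw [Finset.mem_product] at hx hy
      have hl : x.1.length = y.1.length := by
        rw [len_A n x.1 hx.1, len_A n y.1 hy.1]
      obtain ⟨h1, h2⟩ := concat_inj hxy hl
      exact Prod.ext h1 h2
    set Cn := (((stage r ρ' n).2 ×ˢ (Finset.univ : Finset (Fin N))).image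
      (fun wi => wi.1 ++ [wi.2])) with hCn
    have hCsum : ∑ w ∈ (stage r ρ' n).2, ENNReal.ofReal (wprod p w) * μ (wmap S w ⁻¹' A)
        = ∑ w ∈ Cn, ENNReal.ofReal (wprod p w) * μ (wmap S w ⁻¹' A) := by
      rw [hCn, Finset.sum_image hinj, Finset.sum_product]
      refine Finset.sum_congr rfl fun w hw => ?_
      rw [expand w, Finset.mul_sum]
      refine Finset.sum_congr rfl fun i _ => ?_
      rw [← mul_assoc, ← ENNReal.ofReal_mul (le_of_lt (wprod_pos hp0 w)),
        wprod_append, wprod_cons, wprod_nil, mul_one]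
    have hdisj : Disjoint ((stage r ρ' n).1)
        (Cn.filter (fun w => wprod r w ≤ ρ')) := by
      rw [Finset.disjoint_left]
      intro w hwG hwC
      have h1 := len_G n w hwG
      have h2 : w.length = n + 1 := by
        rcases Finset.mem_image.mp (Finset.mem_filter.mp hwC).1 with ⟨⟨v, i⟩, hv, hvi⟩
        rw [Finset.mem_product] at hv
        subst hvi
        simp [len_A n v hv.1]
      omega
    have hG1 : (stage r ρ' (n+1)).1
        = (stage r ρ' n).1 ∪ Cn.filter (fun w => wprod r w ≤ ρ') := rfl
    have hA1 : (stage r ρ' (n+1)).2 = Cn.filter (fun w => ¬ wprod r w ≤ ρ') := rfl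
    rw [hG1, hA1, Finset.sum_union hdisj, add_assoc,
      Finset.sum_filter_add_sum_filter_not Cn (fun w => wprod r w ≤ ρ'), ← hCsum]
    exact ih A hA

end Stage


section Similar

variable {S : Fin N → EuclideanSpace ℝ (Fin d) → EuclideanSpace ℝ (Fin d)} {r : Fin N → ℝ}
variable {U K : Set (EuclideanSpace ℝ (Fin d))}

lemma similarity_injective {f : EuclideanSpace ℝ (Fin d) → EuclideanSpace ℝ (Fin d)} {c : ℝ}
    (hc : 0 < c) (hf : ∀ x y, dist (f x) (f y) = c * dist x y) : Function.Injective f := by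
  intro x y hxy
  have : c * dist x y = 0 := by rw [← hf x y, hxy, dist_self]
  have := (mul_eq_zero.mp this).resolve_left (ne_of_gt hc)
  exact dist_eq_zero.mp this

lemma similarity_surjective {f : EuclideanSpace ℝ (Fin d) → EuclideanSpace ℝ (Fin d)} {c : ℝ}
    (hc : 0 < c) (hf : ∀ x y, dist (f x) (f y) = c * dist x y) : Function.Surjective f := by
  rcases Nat.eq_zero_or_pos d with hd | hd
  · subst hd
    have hsub : Subsingleton (EuclideanSpace ℝ (Fin 0)) := by
      constructor
      intro a b
      ext i
      exact i.elim0
    intro y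
    exact ⟨y, Subsingleton.elim _ _⟩
  -- the normalized map
  set T : EuclideanSpace ℝ (Fin d) → EuclideanSpace ℝ (Fin d) :=
    fun x => (1 / c) • (f x - f 0) with hT
  have hTdist : ∀ x y, dist (T x) (T y) = dist x y := by
    intro x y
    have h2 : ‖f x - f y‖ = c * ‖x - y‖ := by
      rw [← dist_eq_norm, ← dist_eq_norm]; exact hf x y
    rw [hT]
    simp only [dist_eq_norm, ← smul_sub, sub_sub_sub_cancel_right, norm_smul, h2]
    rw [Real.norm_eq_abs, abs_of_pos (by positivity : (0:ℝ) < 1/c)]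
    field_simp
  have hTnorm : ∀ x, ‖T x‖ = ‖x‖ := by
    intro x
    have h0 : T 0 = 0 := by simp [hT]
    have := hTdist x 0
    rw [h0, dist_zero_right, dist_zero_right] at this
    exact this
  have hTinner : ∀ x y, inner ℝ (T x) (T y) = inner ℝ x y := by
    intro x y
    rw [real_inner_eq_norm_mul_self_add_norm_mul_self_sub_norm_sub_mul_self_div_two,
      real_inner_eq_norm_mul_self_add_norm_mul_self_sub_norm_sub_mul_self_div_two (x := x),
      hTnorm, hTnorm, ← dist_eq_norm, ← dist_eq_norm, hTdist]
  have hTsurj : Function.Surjective T := by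
    intro y
    set b := EuclideanSpace.basisFun (Fin d) ℝ with hb
    set v : Fin d → EuclideanSpace ℝ (Fin d) := fun i => T (b i) with hv
    have hvon : Orthonormal ℝ v := by
      rw [orthonormal_iff_ite]
      intro i j
      rw [hv]
      simp only
      rw [hTinner]
      have := b.orthonormal
      rw [orthonormal_iff_ite] at this
      exact this i j
    have hne : Nonempty (Fin d) := ⟨⟨0, hd⟩⟩
    have hspan : Submodule.span ℝ (Set.range v) = ⊤ :=
      LinearIndependent.span_eq_top_of_card_eq_finrank hvon.linearIndependent
        (by simp [finrank_euclideanSpace_fin])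
    have hy : y ∈ Submodule.span ℝ (Set.range v) := hspan ▸ Submodule.mem_top
    obtain ⟨cc, hyc⟩ := (Submodule.mem_span_range_iff_exists_fun ℝ).mp hy
    refine ⟨∑ i, cc i • b i, ?_⟩
    set x := ∑ i, cc i • b i with hx
    have hinner_xv : ∀ i, inner ℝ x (b i) = cc i := by
      intro i
      rw [real_inner_comm]
      exact b.orthonormal.inner_right_fintype cc i
    have hTxy : inner ℝ (T x) y = ‖x‖ ^ 2 := by
      rw [← hyc, inner_sum]
      have : ∀ i, inner ℝ (T x) (cc i • v i) = cc i * inner ℝ x (b i) := by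
        intro i
        rw [real_inner_smul_right, hv]
        simp only
        rw [hTinner]
      rw [Finset.sum_congr rfl fun i _ => this i]
      rw [Finset.sum_congr rfl fun i _ => by rw [hinner_xv i]]
      rw [← real_inner_self_eq_norm_sq, hx]
      rw [inner_sum]
      refine (Finset.sum_congr rfl fun i _ => ?_).symm
      rw [real_inner_smul_right, hinner_xv i]
    have hynorm : ‖y‖ ^ 2 = ‖x‖ ^ 2 := by
      rw [← real_inner_self_eq_norm_sq, ← real_inner_self_eq_norm_sq]
      have h1 : ∀ i, inner ℝ (∑ j, cc j • v j) (cc i • v i) = cc i * cc i := by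
        intro i
        rw [real_inner_smul_right, ← hvon.inner_right_fintype cc i, real_inner_comm]
      conv_lhs => rw [← hyc]
      rw [inner_sum]
      rw [Finset.sum_congr rfl fun i _ => h1 i]
      rw [hx, inner_sum]
      refine (Finset.sum_congr rfl fun i _ => ?_).symm
      rw [real_inner_smul_right, hinner_xv i]
    have : ‖T x - y‖ ^ 2 = 0 := by
      rw [norm_sub_sq_real, hTxy, hTnorm, hynorm]
      ring
    have := pow_eq_zero_iff (n := 2) (by norm_num) |>.mp this
    rw [norm_eq_zero, sub_eq_zero] at this
    exact this
  intro y
  obtain ⟨x, hx⟩ := hTsurj ((1 / c) • (y - f 0))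
  refine ⟨x, ?_⟩
  have : f x - f 0 = c • T x := by
    rw [hT]
    simp only
    rw [smul_smul]
    field_simp
    rw [one_smul]
  rw [hx, smul_smul] at this
  have hcc : c * (1 / c) = 1 := by field_simp
  rw [hcc, one_smul] at this
  have := this
  linear_combination (norm := abel) this  -- f x - f 0 = y - f 0 ⇒ f x = y


lemma wmap_surjective (hS : ∀ i x y, dist (S i x) (S i y) = r i * dist x y)
    (hr0 : ∀ i, 0 < r i) (w : List (Fin N)) : Function.Surjective (wmap S w) := by
  induction w with
  | nil => exact Function.surjective_id
  | cons i w ih =>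
    rw [wmap_cons]
    exact (similarity_surjective (hr0 i) (hS i)).comp ih

lemma wmap_injective (hS : ∀ i x y, dist (S i x) (S i y) = r i * dist x y)
    (hr0 : ∀ i, 0 < r i) (w : List (Fin N)) : Function.Injective (wmap S w) :=
  similarity_injective (wprod_pos hr0 w) (dist_wmap hS w)

lemma wmap_image_ball (hS : ∀ i x y, dist (S i x) (S i y) = r i * dist x y)
    (hr0 : ∀ i, 0 < r i) (w : List (Fin N)) (x : EuclideanSpace ℝ (Fin d)) (t : ℝ) :
    ball (wmap S w x) (wprod r w * t) ⊆ wmap S w '' ball x t := by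
  intro z hz
  obtain ⟨y, rfl⟩ := wmap_surjective hS hr0 w z
  refine ⟨y, ?_, rfl⟩
  rw [mem_ball] at hz ⊢
  rw [dist_wmap hS w y x] at hz
  exact lt_of_mul_lt_mul_left hz (le_of_lt (wprod_pos hr0 w))

lemma wmap_image_subset_U (hUsub : ∀ i, S i '' U ⊆ U) (w : List (Fin N)) :
    wmap S w '' U ⊆ U := by
  induction w with
  | nil => simp
  | cons i w ih =>
    rw [wmap_cons, Set.image_comp]
    exact (Set.image_mono ih).trans (hUsub i)

lemma incomparable_disjoint (hS : ∀ i x y, dist (S i x) (S i y) = r i * dist x y)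
    (hr0 : ∀ i, 0 < r i) (hUsub : ∀ i, S i '' U ⊆ U)
    (hUdisj : Pairwise fun i j : Fin N => Disjoint (S i '' U) (S j '' U)) :
    ∀ w v : List (Fin N), ¬ w <+: v → ¬ v <+: w →
      Disjoint (wmap S w '' U) (wmap S v '' U) := by
  intro w
  induction w with
  | nil => intro v h1 _; exact absurd (List.nil_prefix) h1
  | cons i w ih =>
    intro v h1 h2
    cases v with
    | nil => exact absurd (List.nil_prefix) h2
    | cons j v' =>
      by_cases hij : i = j
      · subst hij
        have h1' : ¬ w <+: v' := fun h => h1 (List.cons_prefix_cons.mpr ⟨rfl, h⟩)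
        have h2' : ¬ v' <+: w := fun h => h2 (List.cons_prefix_cons.mpr ⟨rfl, h⟩)
        have hd := ih v' h1' h2'
        rw [wmap_cons, wmap_cons, Set.image_comp, Set.image_comp]
        exact (Set.disjoint_image_iff (similarity_injective (hr0 i) (hS i))).mpr hd
      · have hsub1 : wmap S (i :: w) '' U ⊆ S i '' U := by
          rw [wmap_cons, Set.image_comp]
          exact Set.image_mono (wmap_image_subset_U hUsub w)
        have hsub2 : wmap S (j :: v') '' U ⊆ S j '' U := by
          rw [wmap_cons, Set.image_comp]
          exact Set.image_mono (wmap_image_subset_U hUsub v')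
        exact Disjoint.mono hsub1 hsub2 (hUdisj hij)

lemma G_incomp {ρ' : ℝ} (hρ : ρ' < 1) (n : ℕ) {w v : List (Fin N)}
    (hw : w ∈ (stage r ρ' n).1) (hv : v ∈ (stage r ρ' n).1) (hne : w ≠ v) : ¬ w <+: v := by
  intro hpre
  have h1 := (G_spec hρ n v hv).2.1 w hpre hne
  have h2 := (G_spec hρ n w hw).1
  linarith

end Similar


section MeasureFacts

variable {S : Fin N → EuclideanSpace ℝ (Fin d) → EuclideanSpace ℝ (Fin d)} {r p : Fin N → ℝ}
variable {μ : Measure (EuclideanSpace ℝ (Fin d))} {K : Set (EuclideanSpace ℝ (Fin d))}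

lemma apply_sum (hμ : μ = ∑ i, ENNReal.ofReal (p i) • μ.map (S i))
    (hSc : ∀ i, Continuous (S i)) :
    ∀ B, MeasurableSet B → μ B = ∑ i, ENNReal.ofReal (p i) * μ (S i ⁻¹' B) := by
  intro B hB
  conv_lhs => rw [hμ]
  rw [Measure.coe_finset_sum, Finset.sum_apply]
  refine Finset.sum_congr rfl fun i _ => ?_
  rw [Measure.smul_apply, smul_eq_mul, Measure.map_apply (hSc i).measurable hB]

lemma word_lower (hp0 : ∀ i, 0 < p i)
    (hμ' : ∀ B, MeasurableSet B → μ B = ∑ i, ENNReal.ofReal (p i) * μ (S i ⁻¹' B))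
    (hS : ∀ i x y, dist (S i x) (S i y) = r i * dist x y) (hr0 : ∀ i, 0 < r i) :
    ∀ w : List (Fin N), ∀ A : Set (EuclideanSpace ℝ (Fin d)), MeasurableSet A →
      ENNReal.ofReal (wprod p w) * μ (wmap S w ⁻¹' A) ≤ μ A := by
  intro w
  induction w with
  | nil => intro A hA; simp
  | cons i w ih =>
    intro A hA
    have hc : Continuous (S i) := by
      have h := continuous_wmap hS hr0 [i]
      simpa [wmap] using h
    have hSiA : MeasurableSet (S i ⁻¹' A) := hc.measurable hA
    have h1 : ENNReal.ofReal (p i) * μ (S i ⁻¹' A) ≤ μ A := by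
      rw [hμ' A hA]
      exact Finset.single_le_sum (f := fun j => ENNReal.ofReal (p j) * μ (S j ⁻¹' A))
        (fun _ _ => zero_le) (Finset.mem_univ i)
    have hpre : wmap S (i :: w) ⁻¹' A = wmap S w ⁻¹' (S i ⁻¹' A) := by
      rw [wmap_cons, Set.preimage_comp]
    calc ENNReal.ofReal (wprod p (i :: w)) * μ (wmap S (i :: w) ⁻¹' A)
        = ENNReal.ofReal (p i) * (ENNReal.ofReal (wprod p w) * μ (wmap S w ⁻¹' (S i ⁻¹' A))) := by
          rw [wprod_cons, ENNReal.ofReal_mul (le_of_lt (hp0 i)), hpre, mul_assoc]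
      _ ≤ ENNReal.ofReal (p i) * μ (S i ⁻¹' A) := mul_le_mul_right (ih (S i ⁻¹' A) hSiA) _
      _ ≤ μ A := h1


lemma G_zero_empty (hr0 : ∀ i, 0 < r i) (n : ℕ) : (stage r (0:ℝ) n).1 = ∅ := by
  rw [Finset.eq_empty_iff_forall_notMem]
  intro w hw
  have h1 := (G_spec one_pos n w hw).1
  have h2 := wprod_pos hr0 w
  linarith

lemma level_p_sum [IsProbabilityMeasure μ] (hp0 : ∀ i, 0 < p i)
    (hμ' : ∀ B, MeasurableSet B → μ B = ∑ i, ENNReal.ofReal (p i) * μ (S i ⁻¹' B))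
    (hS : ∀ i x y, dist (S i x) (S i y) = r i * dist x y) (hr0 : ∀ i, 0 < r i) (n : ℕ) :
    ∑ w ∈ (stage r (0:ℝ) n).2, ENNReal.ofReal (wprod p w) = 1 := by
  have h := stage_measure (ρ' := 0) hp0 hμ' hS hr0 n Set.univ MeasurableSet.univ
  rw [G_zero_empty hr0 n] at h
  simpa [measure_univ] using h.symm

lemma compl_thickening_le [IsProbabilityMeasure μ] {rmax : ℝ}
    (hp0 : ∀ i, 0 < p i)
    (hμ' : ∀ B, MeasurableSet B → μ B = ∑ i, ENNReal.ofReal (p i) * μ (S i ⁻¹' B))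
    (hS : ∀ i x y, dist (S i x) (S i y) = r i * dist x y) (hr0 : ∀ i, 0 < r i)
    (hrm : ∀ i, r i ≤ rmax) (hrmax0 : 0 ≤ rmax) (hrmax1 : rmax < 1)
    (hK : K = ⋃ i, S i '' K) (hKne : K.Nonempty)
    {η R : ℝ} (hη : 0 < η) (hR : 0 ≤ R) :
    μ ((Metric.thickening η K)ᶜ) ≤ μ ((ball (0 : EuclideanSpace ℝ (Fin d)) R)ᶜ) := by
  obtain ⟨k0, hk0⟩ := hKne
  have hKs : ∀ i, S i '' K ⊆ K := by
    intro i
    conv_rhs => rw [hK]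
    exact Set.subset_iUnion (fun j => S j '' K) i
  have hRp : (0:ℝ) < R + ‖k0‖ + 1 := by have := norm_nonneg k0; linarith
  obtain ⟨n, hn⟩ := exists_pow_lt_of_lt_one (div_pos hη hRp) hrmax1
  have key : ∀ w ∈ (stage r (0:ℝ) n).2,
      wmap S w ⁻¹' (Metric.thickening η K)ᶜ ⊆ (ball (0 : EuclideanSpace ℝ (Fin d)) R)ᶜ := by
    intro w hw y hy
    simp only [Set.mem_preimage, Set.mem_compl_iff] at hy ⊢
    intro hyR
    apply hy
    rw [Metric.mem_thickening_iff]
    refine ⟨wmap S w k0, wmap_mem hKs w hk0, ?_⟩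
    rw [dist_wmap hS w y k0]
    have h1 : wprod r w ≤ rmax ^ n := by
      rw [← len_A (r := r) (ρ' := (0:ℝ)) n w hw]
      exact wprod_le_pow hr0 hrm hrmax0 w
    have h2 : dist y k0 ≤ R + ‖k0‖ := by
      calc dist y k0 ≤ dist y 0 + dist 0 k0 := dist_triangle _ _ _
        _ ≤ R + ‖k0‖ := by
            rw [dist_zero_right, dist_comm, dist_zero_right]
            exact add_le_add (le_of_lt (mem_ball_zero_iff.mp hyR)) le_rfl
    have h3 : (0:ℝ) ≤ wprod r w := le_of_lt (wprod_pos hr0 w)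
    calc wprod r w * dist y k0 ≤ rmax ^ n * (R + ‖k0‖ + 1) := by
          exact mul_le_mul h1 (h2.trans (by linarith)) dist_nonneg (pow_nonneg hrmax0 n)
      _ < η / (R + ‖k0‖ + 1) * (R + ‖k0‖ + 1) := by
          exact mul_lt_mul_of_pos_right hn hRp
      _ = η := by field_simp
  have hmeas : MeasurableSet ((Metric.thickening η K)ᶜ) :=
    Metric.isOpen_thickening.measurableSet.compl
  calc μ ((Metric.thickening η K)ᶜ)
      = ∑ w ∈ (stage r (0:ℝ) n).1, ENNReal.ofReal (wprod p w)
          * μ (wmap S w ⁻¹' (Metric.thickening η K)ᶜ)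
        + ∑ w ∈ (stage r (0:ℝ) n).2, ENNReal.ofReal (wprod p w)
          * μ (wmap S w ⁻¹' (Metric.thickening η K)ᶜ) :=
        stage_measure hp0 hμ' hS hr0 n _ hmeas
    _ = ∑ w ∈ (stage r (0:ℝ) n).2, ENNReal.ofReal (wprod p w)
          * μ (wmap S w ⁻¹' (Metric.thickening η K)ᶜ) := by
        rw [G_zero_empty hr0 n]; simp
    _ ≤ ∑ w ∈ (stage r (0:ℝ) n).2, ENNReal.ofReal (wprod p w)
          * μ ((ball (0 : EuclideanSpace ℝ (Fin d)) R)ᶜ) := by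
        refine Finset.sum_le_sum fun w hw => ?_
        exact mul_le_mul_right (measure_mono (key w hw)) _
    _ = (∑ w ∈ (stage r (0:ℝ) n).2, ENNReal.ofReal (wprod p w))
          * μ ((ball (0 : EuclideanSpace ℝ (Fin d)) R)ᶜ) := by
        rw [Finset.sum_mul]
    _ = μ ((ball (0 : EuclideanSpace ℝ (Fin d)) R)ᶜ) := by
        rw [level_p_sum hp0 hμ' hS hr0 n, one_mul]

lemma mu_thickening_eq_one [IsProbabilityMeasure μ] {rmax : ℝ}
    (hp0 : ∀ i, 0 < p i)
    (hμ' : ∀ B, MeasurableSet B → μ B = ∑ i, ENNReal.ofReal (p i) * μ (S i ⁻¹' B))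
    (hS : ∀ i x y, dist (S i x) (S i y) = r i * dist x y) (hr0 : ∀ i, 0 < r i)
    (hrm : ∀ i, r i ≤ rmax) (hrmax0 : 0 ≤ rmax) (hrmax1 : rmax < 1)
    (hK : K = ⋃ i, S i '' K) (hKne : K.Nonempty)
    {η : ℝ} (hη : 0 < η) : μ (Metric.thickening η K) = 1 := by
  have h0 : μ ((Metric.thickening η K)ᶜ) = 0 := by
    have hmono : Antitone (fun n : ℕ => ((ball (0 : EuclideanSpace ℝ (Fin d)) ((n:ℝ)+1))ᶜ : Set _)) := by
      intro m n hmn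
      have hc : (m:ℝ) ≤ (n:ℝ) := Nat.cast_le.mpr hmn
      exact Set.compl_subset_compl.mpr (ball_subset_ball (by linarith))
    have hint : ⋂ n : ℕ, ((ball (0 : EuclideanSpace ℝ (Fin d)) ((n:ℝ)+1))ᶜ : Set _) = ∅ := by
      ext x
      simp only [Set.mem_iInter, Set.mem_compl_iff, mem_ball_zero_iff, Set.mem_empty_iff_false,
        iff_false, not_forall, not_not]
      obtain ⟨n, hn⟩ := exists_nat_gt ‖x‖
      exact ⟨n, by linarith⟩
    have htend := tendsto_measure_iInter_atTop (μ := μ)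
      (fun n => (measurableSet_ball.compl).nullMeasurableSet) hmono
      ⟨0, (measure_lt_top μ _).ne⟩
    rw [hint, measure_empty] at htend
    refine le_antisymm ?_ (zero_le)
    refine ge_of_tendsto htend (Filter.Eventually.of_forall fun n => ?_)
    exact compl_thickening_le hp0 hμ' hS hr0 hrm hrmax0 hrmax1 hK hKne hη (by positivity)
  have hh := measure_add_measure_compl (μ := μ)
    (Metric.isOpen_thickening (E := K) (δ := η)).measurableSet
  rw [h0, add_zero, measure_univ] at hh
  exact hh

lemma mu_K_eq_one [IsProbabilityMeasure μ] {rmax : ℝ}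
    (hp0 : ∀ i, 0 < p i)
    (hμ' : ∀ B, MeasurableSet B → μ B = ∑ i, ENNReal.ofReal (p i) * μ (S i ⁻¹' B))
    (hS : ∀ i x y, dist (S i x) (S i y) = r i * dist x y) (hr0 : ∀ i, 0 < r i)
    (hrm : ∀ i, r i ≤ rmax) (hrmax0 : 0 ≤ rmax) (hrmax1 : rmax < 1)
    (hK : K = ⋃ i, S i '' K) (hKne : K.Nonempty) (hKc : IsCompact K) : μ K = 1 := by
  have hmono : Antitone (fun n : ℕ => Metric.thickening (1/((n:ℝ)+1)) K) := by
    intro m n hmn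
    apply Metric.thickening_mono
    have hc : (m:ℝ) ≤ (n:ℝ) := Nat.cast_le.mpr hmn
    apply one_div_le_one_div_of_le (by positivity)
    linarith
  have hint : ⋂ n : ℕ, Metric.thickening (1/((n:ℝ)+1)) K = K := by
    apply Set.Subset.antisymm
    · intro x hx
      rw [Set.mem_iInter] at hx
      have hinf : Metric.infDist x K ≤ 0 := by
        by_contra hpos
        push_neg at hpos
        obtain ⟨n, hn⟩ := exists_nat_one_div_lt hpos
        have := (Metric.mem_thickening_iff_infDist_lt hKne).mp (hx n)
        linarith
      have : Metric.infDist x K = 0 := le_antisymm hinf (Metric.infDist_nonneg)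
      exact ((hKc.isClosed.mem_iff_infDist_zero hKne).mpr this)
    · intro x hx
      rw [Set.mem_iInter]
      intro n
      exact Metric.self_subset_thickening (by positivity) K hx
  have htend := tendsto_measure_iInter_atTop (μ := μ)
    (fun n => Metric.isOpen_thickening.measurableSet.nullMeasurableSet) hmono
    ⟨0, (measure_lt_top μ _).ne⟩
  rw [hint] at htend
  have hconst : ∀ n : ℕ, (μ ∘ fun n : ℕ => Metric.thickening (1/((n:ℝ)+1)) K) n = 1 := by
    intro n
    exact mu_thickening_eq_one hp0 hμ' hS hr0 hrm hrmax0 hrmax1 hK hKne (by positivity)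
  have : Filter.Tendsto (μ ∘ fun n : ℕ => Metric.thickening (1/((n:ℝ)+1)) K)
      Filter.atTop (nhds 1) := by
    rw [tendsto_congr hconst]
    exact tendsto_const_nhds
  exact (tendsto_nhds_unique htend this)

end MeasureFacts


section Counting

lemma ball_count {ι : Type*} (F : Finset ι) (x : ι → EuclideanSpace ℝ (Fin d)) (ρ : ι → ℝ)
    (z : EuclideanSpace ℝ (Fin d)) {t cc CC : ℝ} (ht : 0 < t) (hcc : 0 < cc)
    (h1 : ∀ i ∈ F, cc * t ≤ ρ i)
    (h2 : ∀ i ∈ F, closedBall (x i) (ρ i) ⊆ closedBall z (CC * t))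
    (hd : (F : Set ι).Pairwise fun i j =>
      Disjoint (closedBall (x i) (ρ i)) (closedBall (x j) (ρ j))) :
    (F.card : ℝ≥0∞) ≤ ENNReal.ofReal ((CC / cc) ^ d) := by
  classical
  rcases F.eq_empty_or_nonempty with rfl | ⟨i0, hi0⟩
  · simp
  have hcct : (0:ℝ) < cc * t := mul_pos hcc ht
  have hCCt : (0:ℝ) ≤ CC * t := by
    have hmem := h2 i0 hi0 (mem_closedBall_self (le_of_lt (lt_of_lt_of_le hcct (h1 i0 hi0))))
    exact le_trans dist_nonneg (mem_closedBall.mp hmem)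
  set v1 := volume (ball (0 : EuclideanSpace ℝ (Fin d)) 1) with hv1
  have hv1pos : v1 ≠ 0 := (measure_ball_pos volume 0 one_pos).ne'
  have hv1top : v1 ≠ ⊤ := measure_ball_lt_top.ne
  have hfr : Module.finrank ℝ (EuclideanSpace ℝ (Fin d)) = d := finrank_euclideanSpace_fin
  have hlow : ∀ i ∈ F,
      ENNReal.ofReal ((cc*t)^d) * v1 ≤ volume (closedBall (x i) (ρ i)) := by
    intro i hi
    have h := Measure.addHaar_closedBall (volume) (x i) (le_of_lt hcct)
    rw [hfr] at h
    rw [← h]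
    exact measure_mono (closedBall_subset_closedBall (h1 i hi))
  have hsum : (F.card : ℝ≥0∞) * (ENNReal.ofReal ((cc*t)^d) * v1)
      ≤ ENNReal.ofReal ((CC*t)^d) * v1 := by
    calc (F.card : ℝ≥0∞) * (ENNReal.ofReal ((cc*t)^d) * v1)
        = ∑ _i ∈ F, ENNReal.ofReal ((cc*t)^d) * v1 := by
          rw [Finset.sum_const, nsmul_eq_mul]
      _ ≤ ∑ i ∈ F, volume (closedBall (x i) (ρ i)) := Finset.sum_le_sum hlow
      _ = volume (⋃ i ∈ F, closedBall (x i) (ρ i)) :=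
          (measure_biUnion_finset hd (fun i _ => measurableSet_closedBall)).symm
      _ ≤ volume (closedBall z (CC*t)) := measure_mono (Set.iUnion₂_subset h2)
      _ = ENNReal.ofReal ((CC*t)^d) * v1 := by
          rw [Measure.addHaar_closedBall (volume) z hCCt, hfr]
  have hCC0 : (0:ℝ) ≤ CC := by
    have h' : CC = (CC * t) / t := by field_simp
    rw [h']
    exact div_nonneg hCCt (le_of_lt ht)
  have hfac : ENNReal.ofReal ((CC*t)^d) * v1
      = ENNReal.ofReal ((CC/cc)^d) * (ENNReal.ofReal ((cc*t)^d) * v1) := by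
    rw [← mul_assoc, ← ENNReal.ofReal_mul (pow_nonneg (div_nonneg hCC0 hcc.le) d)]
    congr 2
    rw [← mul_pow]
    congr 1
    field_simp
  rw [hfac] at hsum
  have hne0 : ENNReal.ofReal ((cc*t)^d) * v1 ≠ 0 :=
    mul_ne_zero (ENNReal.ofReal_pos.mpr (by positivity)).ne' hv1pos
  have hnetop : ENNReal.ofReal ((cc*t)^d) * v1 ≠ ⊤ :=
    ENNReal.mul_ne_top ENNReal.ofReal_ne_top hv1top
  exact (ENNReal.mul_le_mul_iff_left hne0 hnetop).mp hsum

end Counting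


section WordSums

/-- product of `ℝ≥0∞` weights along a word -/
noncomputable def wprodE (a : Fin N → ℝ≥0∞) (w : List (Fin N)) : ℝ≥0∞ := (w.map a).prod

@[simp] lemma wprodE_nil (a : Fin N → ℝ≥0∞) : wprodE a [] = 1 := rfl

@[simp] lemma wprodE_cons (a : Fin N → ℝ≥0∞) (i : Fin N) (w : List (Fin N)) :
    wprodE a (i :: w) = a i * wprodE a w := by simp [wprodE]

/-- the finset of all words of length `k` -/
def levelF (N : ℕ) : ℕ → Finset (List (Fin N))
  | 0 => {[]}
  | k+1 => ((Finset.univ : Finset (Fin N)) ×ˢ levelF N k).image (fun iw => iw.1 :: iw.2)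

lemma mem_levelF : ∀ (k : ℕ) (w : List (Fin N)), w.length = k → w ∈ levelF N k := by
  intro k
  induction k with
  | zero => intro w hw; rw [List.length_eq_zero_iff.mp hw]; simp [levelF]
  | succ k ih =>
    intro w hw
    cases w with
    | nil => simp at hw
    | cons i w =>
      simp only [List.length_cons, Nat.add_right_cancel_iff] at hw
      simp only [levelF, Finset.mem_image, Finset.mem_product]
      exact ⟨⟨i, w⟩, ⟨Finset.mem_univ i, ih w hw⟩, rfl⟩

lemma sum_levelF (a : Fin N → ℝ≥0∞) :
    ∀ k : ℕ, ∑ w ∈ levelF N k, wprodE a w = (∑ i, a i) ^ k := by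
  intro k
  induction k with
  | zero => simp [levelF]
  | succ k ih =>
    have hinj : ∀ x ∈ (Finset.univ : Finset (Fin N)) ×ˢ levelF N k,
        ∀ y ∈ (Finset.univ : Finset (Fin N)) ×ˢ levelF N k,
        x.1 :: x.2 = y.1 :: y.2 → x = y := by
      intro x _ y _ h
      rw [List.cons_eq_cons] at h
      exact Prod.ext h.1 h.2
    rw [levelF, Finset.sum_image hinj, Finset.sum_product]
    simp only [wprodE_cons]
    rw [pow_succ, mul_comm ((∑ i, a i) ^ k) (∑ i, a i), ← ih, ← Finset.sum_mul_sum]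


lemma finite_word_sum (a : Fin N → ℝ≥0∞) (T : Finset (List (Fin N))) :
    ∑ w ∈ T, wprodE a w ≤ (1 - ∑ i, a i)⁻¹ := by
  classical
  set n := T.sup List.length with hn
  have hmaps : ∀ w ∈ T, w.length ∈ Finset.range (n+1) := by
    intro w hw
    rw [Finset.mem_range]
    exact Nat.lt_succ_of_le (Finset.le_sup hw)
  rw [← Finset.sum_fiberwise_of_maps_to hmaps (fun w => wprodE a w)]
  have hfiber : ∀ k ∈ Finset.range (n+1),
      ∑ w ∈ T.filter (fun w => w.length = k), wprodE a w ≤ (∑ i, a i) ^ k := by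
    intro k _
    rw [← sum_levelF a k]
    apply Finset.sum_le_sum_of_subset
    intro w hw
    rw [Finset.mem_filter] at hw
    exact mem_levelF k w hw.2
  calc ∑ k ∈ Finset.range (n+1), ∑ w ∈ T.filter (fun w => w.length = k), wprodE a w
      ≤ ∑ k ∈ Finset.range (n+1), (∑ i, a i) ^ k := Finset.sum_le_sum hfiber
    _ ≤ ∑' k : ℕ, (∑ i, a i) ^ k := ENNReal.sum_le_tsum _
    _ = (1 - ∑ i, a i)⁻¹ := ENNReal.tsum_geometric _

end WordSums


section Moment

variable {S : Fin N → EuclideanSpace ℝ (Fin d) → EuclideanSpace ℝ (Fin d)} {r p : Fin N → ℝ}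
variable {μ : Measure (EuclideanSpace ℝ (Fin d))}
variable {U K : Set (EuclideanSpace ℝ (Fin d))}

lemma wprodE_ofReal {aR : Fin N → ℝ} (h : ∀ i, 0 ≤ aR i) (w : List (Fin N)) :
    wprodE (fun i => ENNReal.ofReal (aR i)) w = ENNReal.ofReal (wprod aR w) := by
  induction w with
  | nil => simp
  | cons i w ih =>
    rw [wprodE_cons, wprod_cons, ih, ← ENNReal.ofReal_mul (h i)]

lemma moment_bound [IsProbabilityMeasure μ] (hN : 1 ≤ N)
    (hS : ∀ i x y, dist (S i x) (S i y) = r i * dist x y)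
    (hr0 : ∀ i, 0 < r i) (hr1 : ∀ i, r i < 1) (hp0 : ∀ i, 0 < p i)
    (hμ' : ∀ B, MeasurableSet B → μ B = ∑ i, ENNReal.ofReal (p i) * μ (S i ⁻¹' B))
    (hμK : μ K = 1)
    (hK : K = ⋃ i, S i '' K) (hKc : IsCompact K) (hKne : K.Nonempty)
    (hUo : IsOpen U) (hUne : U.Nonempty) (hUsub : ∀ i, S i '' U ⊆ U)
    (hUdisj : Pairwise fun i j : Fin N => Disjoint (S i '' U) (S j '' U))
    (q t : ℝ) (hq : 0 ≤ q) (hθ : ∑ i, p i ^ q * r i ^ t < 1) :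
    ∃ C : ℝ≥0∞, C ≠ ⊤ ∧ ∀ (c : ℕ → EuclideanSpace ℝ (Fin d)) (ρ : ℕ → ℝ),
      (∀ n, c n ∈ K) → (∀ n, 0 < ρ n ∧ ρ n < 1) →
      (Pairwise fun m n => Disjoint (closedBall (c m) (ρ m)) (closedBall (c n) (ρ n))) →
      ∀ F : Finset ℕ,
        ∑ n ∈ F, μ (ball (c n) (ρ n)) ^ q * ENNReal.ofReal (2 * ρ n) ^ t ≤ C := by
  classical
  have hNe : Nonempty (Fin N) := Fin.pos_iff_nonempty.mp (by omega)
  have hune : (Finset.univ : Finset (Fin N)).Nonempty := Finset.univ_nonempty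
  -- extremes of the ratios
  set rmin := Finset.univ.inf' hune r with hrmin
  set rmax := Finset.univ.sup' hune r with hrmax
  have hrmin_le : ∀ i, rmin ≤ r i := fun i => Finset.inf'_le r (Finset.mem_univ i)
  have hle_rmax : ∀ i, r i ≤ rmax := fun i => Finset.le_sup' r (Finset.mem_univ i)
  have hrmin_pos : 0 < rmin := by
    obtain ⟨i, _, hi⟩ := Finset.exists_mem_eq_inf' hune r
    rw [hrmin, hi]; exact hr0 i
  have hrmin_lt1 : rmin < 1 := by
    obtain ⟨i, _, hi⟩ := Finset.exists_mem_eq_inf' hune r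
    rw [hrmin, hi]; exact hr1 i
  have hrmax_pos : 0 < rmax := by
    obtain ⟨i, _, hi⟩ := Finset.exists_mem_eq_sup' hune r
    rw [hrmax, hi]; exact hr0 i
  have hrmax_lt1 : rmax < 1 := by
    obtain ⟨i, _, hi⟩ := Finset.exists_mem_eq_sup' hune r
    rw [hrmax, hi]; exact hr1 i
  -- geometric data
  obtain ⟨u0, hu0⟩ := hUne
  obtain ⟨a0, ha0, hball⟩ := Metric.isOpen_iff.mp hUo u0 hu0
  set a := a0 / 2 with ha
  have hapos : 0 < a := by positivity
  have haball : ball u0 (2 * a) ⊆ U := by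
    rw [ha]; ring_nf; simpa using hball
  obtain ⟨k0, hk0⟩ := hKne
  set DK := Metric.diam K with hDK
  have hDK0 : 0 ≤ DK := Metric.diam_nonneg
  have hdistK : ∀ x ∈ K, ∀ y ∈ K, dist x y ≤ DK :=
    fun x hx y hy => Metric.dist_le_diam_of_mem hKc.isBounded hx hy
  set DU := dist u0 k0 with hDU
  have hDU0 : 0 ≤ DU := dist_nonneg
  have hKs : ∀ i, S i '' K ⊆ K := by
    intro i
    conv_rhs => rw [hK]
    exact Set.subset_iUnion (fun j => S j '' K) i
  have hμKc : μ Kᶜ = 0 := by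
    have := measure_compl (μ := μ) hKc.measurableSet (measure_ne_top μ K)
    rw [hμK, measure_univ] at this
    simpa using this
  -- the ℝ≥0∞-weights
  set aR : Fin N → ℝ := fun i => p i ^ q * r i ^ t with haR
  have haR0 : ∀ i, 0 ≤ aR i := fun i =>
    mul_nonneg (Real.rpow_nonneg (le_of_lt (hp0 i)) q) (Real.rpow_nonneg (le_of_lt (hr0 i)) t)
  set aE : Fin N → ℝ≥0∞ := fun i => ENNReal.ofReal (aR i) with haE
  set θE : ℝ≥0∞ := ∑ i, aE i with hθE
  have hθE1 : θE < 1 := by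
    rw [hθE, haE, ← ENNReal.ofReal_sum_of_nonneg (fun i _ => haR0 i)]
    calc ENNReal.ofReal (∑ i, aR i) < ENNReal.ofReal 1 := by
          rw [ENNReal.ofReal_lt_ofReal_iff one_pos]; exact hθ
      _ = 1 := ENNReal.ofReal_one
  -- constants
  set Mc : ℝ≥0∞ := ENNReal.ofReal (((a + DU + DK + 1) / (a * rmin)) ^ d) with hMc
  set K2 : ℝ≥0∞ := ENNReal.ofReal (max ((2/rmin) ^ t) (2 ^ t)) with hK2
  set Lc : ℝ≥0∞ := ENNReal.ofReal (((2/rmin + DK) / 1) ^ d) with hLc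
  refine ⟨Mc ^ q * K2 * (Lc * (1 - θE)⁻¹), ?_, ?_⟩
  · apply ENNReal.mul_ne_top
    apply ENNReal.mul_ne_top
    · exact ENNReal.rpow_ne_top_of_nonneg hq ENNReal.ofReal_ne_top
    · exact ENNReal.ofReal_ne_top
    apply ENNReal.mul_ne_top ENNReal.ofReal_ne_top
    rw [Ne, ENNReal.inv_eq_top]
    exact (tsub_pos_of_lt hθE1).ne'
  intro c ρ hcK hρ hdisj F
  -- fuel for the cut sets
  choose nf hnf using fun n => exists_pow_lt_of_lt_one (hρ n).1 hrmax_lt1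
  -- the cut sets and their meeting parts
  set G : ℕ → Finset (List (Fin N)) := fun n => (stage r (ρ n) (nf n)).1 with hG
  set Λ : ℕ → Finset (List (Fin N)) := fun n =>
    (G n).filter (fun w => (wmap S w '' K ∩ ball (c n) (ρ n)).Nonempty) with hΛ
  have hcut_le : ∀ n, ∀ w ∈ G n, wprod r w ≤ ρ n :=
    fun n w hw => (G_spec (hρ n).2 (nf n) w hw).1
  have hcut_ge : ∀ n, ∀ w ∈ G n, ρ n * rmin ≤ wprod r w := by
    intro n w hw
    obtain ⟨v, i, hvi, hv⟩ := (G_spec (hρ n).2 (nf n) w hw).2.2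
    rw [hvi, wprod_append, wprod_cons, wprod_nil, mul_one]
    calc ρ n * rmin ≤ wprod r v * r i := by
          apply mul_le_mul (le_of_lt hv) (hrmin_le i) (le_of_lt hrmin_pos)
          exact le_of_lt (wprod_pos hr0 v)
      _ = wprod r v * r i := rfl
  have hAempty : ∀ n, (stage r (ρ n) (nf n)).2 = ∅ :=
    fun n => A_empty (hρ n).2 hr0 hle_rmax (le_of_lt hrmax_pos) (nf n) (le_of_lt (hnf n))
  -- measure of each packing ball is at most the total weight of the meeting cylinders
  have hmeasball : ∀ n, μ (ball (c n) (ρ n)) ≤ ∑ w ∈ Λ n, ENNReal.ofReal (wprod p w) := by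
    intro n
    have hmeas : MeasurableSet (ball (c n) (ρ n)) := measurableSet_ball
    have hid := stage_measure (ρ' := ρ n) hp0 hμ' hS hr0 (nf n) _ hmeas
    rw [hAempty n, Finset.sum_empty, add_zero] at hid
    rw [hid, ← Finset.sum_filter_add_sum_filter_not (G n)
      (fun w => (wmap S w '' K ∩ ball (c n) (ρ n)).Nonempty)]
    have h2 : ∑ w ∈ (G n).filter (fun w => ¬ (wmap S w '' K ∩ ball (c n) (ρ n)).Nonempty),
        ENNReal.ofReal (wprod p w) * μ (wmap S w ⁻¹' ball (c n) (ρ n)) = 0 := by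
      apply Finset.sum_eq_zero
      intro w hw
      rw [Finset.mem_filter] at hw
      have hempty : wmap S w '' K ∩ ball (c n) (ρ n) = ∅ :=
        Set.not_nonempty_iff_eq_empty.mp hw.2
      have hsub : wmap S w ⁻¹' ball (c n) (ρ n) ⊆ Kᶜ := by
        intro y hy hyK
        have hmem : wmap S w y ∈ wmap S w '' K ∩ ball (c n) (ρ n) := ⟨⟨y, hyK, rfl⟩, hy⟩
        rw [hempty] at hmem
        exact hmem
      rw [measure_mono_null hsub hμKc, mul_zero]
    rw [h2, add_zero]
    apply Finset.sum_le_sum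
    intro w hw
    calc ENNReal.ofReal (wprod p w) * μ (wmap S w ⁻¹' ball (c n) (ρ n))
        ≤ ENNReal.ofReal (wprod p w) * 1 := mul_le_mul_right prob_le_one _
      _ = ENNReal.ofReal (wprod p w) := mul_one _
  -- each Λ n is nonempty
  have hΛne : ∀ n, (Λ n).Nonempty := by
    intro n
    rcases stage_cover (ρ' := ρ n) hK (nf n) (c n) (hcK n) with ⟨w, hw, hmem⟩ | ⟨w, hw, hmem⟩
    · exact ⟨w, Finset.mem_filter.mpr ⟨hw, ⟨c n, hmem, mem_ball_self (hρ n).1⟩⟩⟩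
    · rw [hAempty n] at hw
      simp at hw
  -- cylinder count
  have hcount : ∀ n, ((Λ n).card : ℝ≥0∞) ≤ Mc := by
    intro n
    have hbc := ball_count (Λ n) (fun w => wmap S w u0) (fun w => a * wprod r w)
      (c n) (t := ρ n) (cc := a * rmin) (CC := a + DU + DK + 1) (hρ n).1
      (mul_pos hapos hrmin_pos) ?_ ?_ ?_
    · refine hbc.trans ?_
      rw [hMc]
    · intro w hw
      have hwG := (Finset.mem_filter.mp hw).1
      have := hcut_ge n w hwG
      calc a * rmin * ρ n = a * (ρ n * rmin) := by ring
        _ ≤ a * wprod r w := by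
            exact mul_le_mul_of_nonneg_left this (le_of_lt hapos)
    · intro w hw
      obtain ⟨hwG, z0, ⟨z, hzK, hz0⟩, hz0ball⟩ := Finset.mem_filter.mp hw
      have hwle := hcut_le n w hwG
      have hwpos := wprod_pos hr0 w
      intro y hy
      rw [mem_closedBall] at hy ⊢
      have hd1 : dist (wmap S w u0) (c n) ≤ wprod r w * (DU + DK) + ρ n := by
        calc dist (wmap S w u0) (c n) ≤ dist (wmap S w u0) z0 + dist z0 (c n) :=
              dist_triangle _ _ _
          _ ≤ wprod r w * (DU + DK) + ρ n := by
              apply add_le_add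
              · rw [← hz0, dist_wmap hS w u0 z]
                apply mul_le_mul_of_nonneg_left ?_ (le_of_lt hwpos)
                calc dist u0 z ≤ dist u0 k0 + dist k0 z := dist_triangle _ _ _
                  _ ≤ DU + DK := add_le_add le_rfl (hdistK k0 hk0 z hzK)
              · exact le_of_lt (mem_ball.mp hz0ball)
      calc dist y (c n) ≤ dist y (wmap S w u0) + dist (wmap S w u0) (c n) := dist_triangle _ _ _
        _ ≤ a * wprod r w + (wprod r w * (DU + DK) + ρ n) := add_le_add hy hd1
        _ ≤ (a + DU + DK + 1) * ρ n := by nlinarith [(hρ n).1]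
    · intro w hw v hv hne
      rw [Finset.mem_coe] at hw hv
      have hwG := (Finset.mem_filter.mp hw).1
      have hvG := (Finset.mem_filter.mp hv).1
      have hsub : ∀ u ∈ G n, closedBall (wmap S u u0) (a * wprod r u) ⊆ wmap S u '' U := by
        intro u _
        have hwpos := wprod_pos hr0 u
        calc closedBall (wmap S u u0) (a * wprod r u)
            ⊆ ball (wmap S u u0) (wprod r u * (2 * a)) := by
              apply closedBall_subset_ball
              nlinarith
          _ ⊆ wmap S u '' ball u0 (2 * a) := wmap_image_ball hS hr0 u u0 (2*a)
          _ ⊆ wmap S u '' U := Set.image_mono haball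
      exact Disjoint.mono (hsub w hwG) (hsub v hvG)
        (incomparable_disjoint hS hr0 hUsub hUdisj w v
          (G_incomp (hρ n).2 (nf n) hwG hvG hne)
          (G_incomp (hρ n).2 (nf n) hvG hwG hne.symm))
  -- per-ball estimate
  have hperball : ∀ n, μ (ball (c n) (ρ n)) ^ q * ENNReal.ofReal (2 * ρ n) ^ t
      ≤ Mc ^ q * K2 * ∑ w ∈ Λ n, wprodE aE w := by
    intro n
    obtain ⟨wstar, hwstar, hsupeq⟩ :=
      Finset.exists_mem_eq_sup (Λ n) (hΛne n) (fun w => ENNReal.ofReal (wprod p w))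
    have h1 : μ (ball (c n) (ρ n)) ≤ Mc * ENNReal.ofReal (wprod p wstar) := by
      refine (hmeasball n).trans ?_
      calc ∑ w ∈ Λ n, ENNReal.ofReal (wprod p w)
          ≤ (Λ n).card • ((Λ n).sup (fun w => ENNReal.ofReal (wprod p w))) :=
            Finset.sum_le_card_nsmul _ _ _ (fun w hw => Finset.le_sup (f := fun w => ENNReal.ofReal (wprod p w)) hw)
        _ = ((Λ n).card : ℝ≥0∞) * ((Λ n).sup (fun w => ENNReal.ofReal (wprod p w))) :=
            nsmul_eq_mul _ _
        _ ≤ Mc * ENNReal.ofReal (wprod p wstar) := by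
            rw [← hsupeq]
            exact mul_le_mul_left (hcount n) _
    have h2 : μ (ball (c n) (ρ n)) ^ q
        ≤ Mc ^ q * ∑ w ∈ Λ n, (ENNReal.ofReal (wprod p w)) ^ q := by
      calc μ (ball (c n) (ρ n)) ^ q ≤ (Mc * ENNReal.ofReal (wprod p wstar)) ^ q :=
            ENNReal.rpow_le_rpow h1 hq
        _ = Mc ^ q * (ENNReal.ofReal (wprod p wstar)) ^ q :=
            ENNReal.mul_rpow_of_nonneg _ _ hq
        _ ≤ Mc ^ q * ∑ w ∈ Λ n, (ENNReal.ofReal (wprod p w)) ^ q := by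
            apply mul_le_mul_right
            exact Finset.single_le_sum (f := fun w => (ENNReal.ofReal (wprod p w)) ^ q)
              (fun _ _ => zero_le) hwstar
    have hperw : ∀ w ∈ Λ n, (ENNReal.ofReal (wprod p w)) ^ q * ENNReal.ofReal (2 * ρ n) ^ t
        ≤ K2 * wprodE aE w := by
      intro w hwΛ
      have hwG := (Finset.mem_filter.mp hwΛ).1
      have hple := hcut_le n w hwG
      have hpge := hcut_ge n w hwG
      have hwp := wprod_pos hr0 w
      have hpp := wprod_pos hp0 w
      have hρn := (hρ n).1
      have hK2r0 : (0:ℝ) ≤ max ((2/rmin)^t) (2^t) :=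
        le_trans (Real.rpow_nonneg (by norm_num) t) (le_max_right _ _)
      have hreal : (2 * ρ n) ^ t ≤ max ((2/rmin)^t) (2^t) * (wprod r w) ^ t := by
        have hb : 2 * ρ n = (2 * ρ n / wprod r w) * wprod r w := by field_simp
        rw [hb, Real.mul_rpow (by positivity) (le_of_lt hwp)]
        apply mul_le_mul_of_nonneg_right ?_ (Real.rpow_nonneg (le_of_lt hwp) t)
        set b := 2 * ρ n / wprod r w with hbdef
        have hb2 : 2 ≤ b := by
          rw [hbdef, le_div_iff₀ hwp]
          linarith
        have hbB : b ≤ 2 / rmin := by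
          rw [hbdef, div_le_div_iff₀ hwp hrmin_pos]
          nlinarith
        rcases le_or_gt 0 t with ht0 | ht0
        · exact le_max_of_le_left (Real.rpow_le_rpow (by linarith) hbB ht0)
        · apply le_max_of_le_right
          have hsplit : b ^ t = (b / 2) ^ t * 2 ^ t := by
            rw [← Real.mul_rpow (by linarith) (by norm_num)]
            congr 1
            field_simp
          rw [hsplit]
          calc (b/2) ^ t * 2 ^ t ≤ 1 * 2 ^ t := by
                apply mul_le_mul_of_nonneg_right ?_ (Real.rpow_nonneg (by norm_num) t)
                exact Real.rpow_le_one_of_one_le_of_nonpos (by linarith) (le_of_lt ht0)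
            _ = 2 ^ t := one_mul _
      have hwprod_eq : wprod p w ^ q * wprod r w ^ t = wprod aR w := by
        rw [haR, wprod_mul (fun i => p i ^ q) (fun i => r i ^ t) w,
          wprod_rpow hp0 q w, wprod_rpow hr0 t w]
      calc (ENNReal.ofReal (wprod p w)) ^ q * ENNReal.ofReal (2 * ρ n) ^ t
          = ENNReal.ofReal (wprod p w ^ q) * ENNReal.ofReal ((2 * ρ n) ^ t) := by
            rw [ENNReal.ofReal_rpow_of_pos hpp, ENNReal.ofReal_rpow_of_pos (by positivity)]
        _ ≤ ENNReal.ofReal (wprod p w ^ q)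
              * ENNReal.ofReal (max ((2/rmin)^t) (2^t) * wprod r w ^ t) :=
            mul_le_mul_right (ENNReal.ofReal_le_ofReal hreal) _
        _ = K2 * ENNReal.ofReal (wprod p w ^ q * wprod r w ^ t) := by
            rw [ENNReal.ofReal_mul hK2r0, mul_left_comm,
              ← ENNReal.ofReal_mul (Real.rpow_nonneg (le_of_lt hpp) q), hK2]
        _ = K2 * wprodE aE w := by
            rw [hwprod_eq, haE, wprodE_ofReal haR0 w]
    calc μ (ball (c n) (ρ n)) ^ q * ENNReal.ofReal (2 * ρ n) ^ t
        ≤ (Mc ^ q * ∑ w ∈ Λ n, (ENNReal.ofReal (wprod p w)) ^ q)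
            * ENNReal.ofReal (2 * ρ n) ^ t := mul_le_mul_left h2 _
      _ = Mc ^ q * ∑ w ∈ Λ n, (ENNReal.ofReal (wprod p w)) ^ q
            * ENNReal.ofReal (2 * ρ n) ^ t := by
          rw [mul_assoc, Finset.sum_mul]
      _ ≤ Mc ^ q * ∑ w ∈ Λ n, K2 * wprodE aE w := by
          apply mul_le_mul_right
          exact Finset.sum_le_sum hperw
      _ = Mc ^ q * K2 * ∑ w ∈ Λ n, wprodE aE w := by
          rw [← Finset.mul_sum, mul_assoc]
  -- fiber count
  have hfiber : ∀ w : List (Fin N),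
      ((((F.sigma Λ).filter (fun x => x.2 = w)).card) : ℝ≥0∞) ≤ Lc := by
    intro w
    have hwpos := wprod_pos hr0 w
    have hbc := ball_count ((F.sigma Λ).filter (fun x => x.2 = w))
      (fun x => c x.1) (fun x => ρ x.1) (wmap S w k0)
      (t := wprod r w) (cc := 1) (CC := 2/rmin + DK) hwpos one_pos ?_ ?_ ?_
    · refine hbc.trans ?_
      rw [hLc]
    · intro x hx
      rw [Finset.mem_filter, Finset.mem_sigma] at hx
      obtain ⟨⟨_, hxΛ⟩, hxw⟩ := hx
      rw [one_mul, ← hxw]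
      exact hcut_le x.1 x.2 (Finset.mem_filter.mp hxΛ).1
    · intro x hx
      rw [Finset.mem_filter, Finset.mem_sigma] at hx
      obtain ⟨⟨_, hxΛ⟩, hxw⟩ := hx
      subst hxw
      obtain ⟨hxG, z0, ⟨z, hzK, hz0⟩, hz0ball⟩ := Finset.mem_filter.mp hxΛ
      have h1 := hcut_le x.1 x.2 hxG
      have h2 := hcut_ge x.1 x.2 hxG
      have hwpos2 := wprod_pos hr0 x.2
      intro y hy
      rw [mem_closedBall] at hy ⊢
      have hd1 : dist (c x.1) (wmap S x.2 k0) ≤ ρ x.1 + wprod r x.2 * DK := by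
        calc dist (c x.1) (wmap S x.2 k0)
            ≤ dist (c x.1) z0 + dist z0 (wmap S x.2 k0) := dist_triangle _ _ _
          _ ≤ ρ x.1 + wprod r x.2 * DK := by
              apply add_le_add
              · rw [dist_comm]
                exact le_of_lt (mem_ball.mp hz0ball)
              · rw [← hz0, dist_wmap hS x.2 z k0]
                exact mul_le_mul_of_nonneg_left (hdistK z hzK k0 hk0) (le_of_lt hwpos2)
      have hρle : ρ x.1 ≤ wprod r x.2 / rmin := by
        rw [le_div_iff₀ hrmin_pos]
        linarith [h2]
      calc dist y (wmap S x.2 k0)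
          ≤ dist y (c x.1) + dist (c x.1) (wmap S x.2 k0) := dist_triangle _ _ _
        _ ≤ ρ x.1 + (ρ x.1 + wprod r x.2 * DK) := add_le_add hy hd1
        _ ≤ (2/rmin + DK) * wprod r x.2 := by
            have h3 : 2 * ρ x.1 ≤ 2 * (wprod r x.2 / rmin) := by linarith
            have h4 : (2/rmin + DK) * wprod r x.2
                = 2 * (wprod r x.2 / rmin) + wprod r x.2 * DK := by
              field_simp
            rw [h4]
            linarith
    · intro x hx y hy hne
      rw [Finset.mem_coe, Finset.mem_filter] at hx hy
      have hxy : x.1 ≠ y.1 := by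
        intro h
        apply hne
        have := hx.2.trans hy.2.symm
        exact Sigma.ext h (by rw [hx.2, hy.2])
      exact hdisj hxy
  -- put everything together
  calc ∑ n ∈ F, μ (ball (c n) (ρ n)) ^ q * ENNReal.ofReal (2 * ρ n) ^ t
      ≤ ∑ n ∈ F, Mc ^ q * K2 * ∑ w ∈ Λ n, wprodE aE w :=
        Finset.sum_le_sum fun n _ => hperball n
    _ = Mc ^ q * K2 * ∑ n ∈ F, ∑ w ∈ Λ n, wprodE aE w := by rw [Finset.mul_sum]
    _ ≤ Mc ^ q * K2 * (Lc * (1 - θE)⁻¹) := by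
        apply mul_le_mul_right
        rw [← Finset.sum_sigma F Λ (fun x => wprodE aE x.2)]
        set T := (F.sigma Λ).image (fun x => x.2) with hT
        have hmaps : ∀ x ∈ F.sigma Λ, x.2 ∈ T := fun x hx => Finset.mem_image_of_mem _ hx
        rw [← Finset.sum_fiberwise_of_maps_to hmaps (fun x => wprodE aE x.2)]
        have hinner : ∀ w ∈ T,
            ∑ x ∈ (F.sigma Λ).filter (fun x => x.2 = w), wprodE aE x.2
              ≤ Lc * wprodE aE w := by
          intro w _
          have hcongr : ∀ x ∈ (F.sigma Λ).filter (fun x => x.2 = w),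
              wprodE aE x.2 = wprodE aE w := by
            intro x hx
            rw [(Finset.mem_filter.mp hx).2]
          rw [Finset.sum_congr rfl hcongr, Finset.sum_const, nsmul_eq_mul]
          exact mul_le_mul_left (hfiber w) _
        calc ∑ w ∈ T, ∑ x ∈ (F.sigma Λ).filter (fun x => x.2 = w), wprodE aE x.2
            ≤ ∑ w ∈ T, Lc * wprodE aE w := Finset.sum_le_sum hinner
          _ = Lc * ∑ w ∈ T, wprodE aE w := by rw [Finset.mul_sum]
          _ ≤ Lc * (1 - θE)⁻¹ := by
              apply mul_le_mul_right
              rw [hθE]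
              exact finite_word_sum aE T

end Moment


section Beta

variable {r p : Fin N → ℝ} {β : ℝ → ℝ}

lemma sum_exponent_strict_anti (hN : 1 ≤ N) (hr0 : ∀ i, 0 < r i) (hr1 : ∀ i, r i < 1)
    (hp0 : ∀ i, 0 < p i) {q t1 t2 : ℝ} (h : t1 < t2) :
    ∑ i, p i ^ q * r i ^ t2 < ∑ i, p i ^ q * r i ^ t1 := by
  have hune : (Finset.univ : Finset (Fin N)).Nonempty := by
    rw [Finset.univ_nonempty_iff]
    exact Fin.pos_iff_nonempty.mp (by omega)
  apply Finset.sum_lt_sum_of_nonempty hune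
  intro i _
  exact mul_lt_mul_of_pos_left
    (Real.rpow_lt_rpow_of_exponent_gt (hr0 i) (hr1 i) h)
    (Real.rpow_pos_of_pos (hp0 i) q)

lemma beta_le_of_one_le (hN : 1 ≤ N) (hr0 : ∀ i, 0 < r i) (hr1 : ∀ i, r i < 1)
    (hp0 : ∀ i, 0 < p i) (hβ : ∀ q, ∑ i, p i ^ q * r i ^ β q = 1) {q t : ℝ}
    (h : 1 ≤ ∑ i, p i ^ q * r i ^ t) : t ≤ β q := by
  by_contra hlt
  push_neg at hlt
  have := sum_exponent_strict_anti hN hr0 hr1 hp0 (q := q) hlt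
  rw [hβ q] at this
  linarith

lemma beta_ge_of_le_one (hN : 1 ≤ N) (hr0 : ∀ i, 0 < r i) (hr1 : ∀ i, r i < 1)
    (hp0 : ∀ i, 0 < p i) (hβ : ∀ q, ∑ i, p i ^ q * r i ^ β q = 1) {q t : ℝ}
    (h : ∑ i, p i ^ q * r i ^ t ≤ 1) : β q ≤ t := by
  by_contra hlt
  push_neg at hlt
  have := sum_exponent_strict_anti hN hr0 hr1 hp0 (q := q) hlt
  rw [hβ q] at this
  linarith

lemma beta_convexOn (hN : 1 ≤ N) (hr0 : ∀ i, 0 < r i) (hr1 : ∀ i, r i < 1)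
    (hp0 : ∀ i, 0 < p i) (hβ : ∀ q, ∑ i, p i ^ q * r i ^ β q = 1) :
    ConvexOn ℝ Set.univ β := by
  refine ⟨convex_univ, ?_⟩
  intro q1 _ q2 _ a b ha hb hab
  simp only [smul_eq_mul]
  apply beta_ge_of_le_one hN hr0 hr1 hp0 hβ
  have hterm : ∀ i, p i ^ (a*q1 + b*q2) * r i ^ (a * β q1 + b * β q2)
      = (p i ^ q1 * r i ^ β q1) ^ a * (p i ^ q2 * r i ^ β q2) ^ b := by
    intro i
    rw [Real.rpow_add (hp0 i), Real.rpow_add (hr0 i)]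
    rw [Real.mul_rpow (Real.rpow_nonneg (le_of_lt (hp0 i)) q1) (Real.rpow_nonneg (le_of_lt (hr0 i)) (β q1)),
      Real.mul_rpow (Real.rpow_nonneg (le_of_lt (hp0 i)) q2) (Real.rpow_nonneg (le_of_lt (hr0 i)) (β q2))]
    rw [mul_comm a q1, mul_comm b q2, mul_comm a (β q1), mul_comm b (β q2)]
    rw [Real.rpow_mul (le_of_lt (hp0 i)), Real.rpow_mul (le_of_lt (hp0 i)),
      Real.rpow_mul (le_of_lt (hr0 i)), Real.rpow_mul (le_of_lt (hr0 i))]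
    ring
  calc ∑ i, p i ^ (a*q1 + b*q2) * r i ^ (a * β q1 + b * β q2)
      = ∑ i, (p i ^ q1 * r i ^ β q1) ^ a * (p i ^ q2 * r i ^ β q2) ^ b :=
        Finset.sum_congr rfl fun i _ => hterm i
    _ ≤ ∑ i, (a * (p i ^ q1 * r i ^ β q1) + b * (p i ^ q2 * r i ^ β q2)) := by
        apply Finset.sum_le_sum
        intro i _
        exact Real.geom_mean_le_arith_mean2_weighted ha hb
          (mul_nonneg (Real.rpow_nonneg (le_of_lt (hp0 i)) q1) (Real.rpow_nonneg (le_of_lt (hr0 i)) (β q1)))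
          (mul_nonneg (Real.rpow_nonneg (le_of_lt (hp0 i)) q2) (Real.rpow_nonneg (le_of_lt (hr0 i)) (β q2))) hab
    _ = a * ∑ i, p i ^ q1 * r i ^ β q1 + b * ∑ i, p i ^ q2 * r i ^ β q2 := by
        rw [Finset.sum_add_distrib, Finset.mul_sum, Finset.mul_sum]
    _ = 1 := by rw [hβ q1, hβ q2, mul_one, mul_one, hab]

lemma beta_supporting {β'0 : ℝ} (hconv : ConvexOn ℝ Set.univ β) (hβ' : HasDerivAt β β'0 0)
    {q : ℝ} (hq : q < 0) : β 0 + q * β'0 ≤ β q := by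
  have hslope : ∀ h : ℝ, 0 < h → (β 0 - β q) / (0 - q) ≤ (β h - β 0) / (h - 0) := by
    intro h hh
    exact hconv.slope_mono_adjacent (Set.mem_univ q) (Set.mem_univ h) hq hh
  have htend : Filter.Tendsto (fun h => (β h - β 0) / (h - 0)) (𝓝[>] (0:ℝ)) (𝓝 β'0) := by
    have h1 := hasDerivAt_iff_tendsto_slope.mp hβ'
    have h2 : (𝓝[>] (0:ℝ)) ≤ 𝓝[≠] (0:ℝ) :=
      nhdsWithin_mono _ (fun x hx => ne_of_gt hx)
    have h3 := h1.mono_left h2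
    refine h3.congr' ?_
    filter_upwards [self_mem_nhdsWithin] with h hh
    rw [slope_def_field]
  have hle : (β 0 - β q) / (0 - q) ≤ β'0 := by
    refine ge_of_tendsto htend ?_
    filter_upwards [self_mem_nhdsWithin] with h hh
    exact hslope h hh
  rw [div_le_iff₀ (by linarith : (0:ℝ) < 0 - q)] at hle
  linarith [hle]

lemma beta_ge_neg_line (hN : 1 ≤ N) (hr0 : ∀ i, 0 < r i) (hr1 : ∀ i, r i < 1)
    (hp0 : ∀ i, 0 < p i) (hβ : ∀ q, ∑ i, p i ^ q * r i ^ β q = 1)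
    {αm : ℝ} {i0 : Fin N} (hi0 : Real.log (p i0) / Real.log (r i0) = αm)
    {q : ℝ} (hq : 0 ≤ q) : -αm * q ≤ β q := by
  apply beta_le_of_one_le hN hr0 hr1 hp0 hβ
  have hlogr : Real.log (r i0) ≠ 0 :=
    ne_of_lt (Real.log_neg (hr0 i0) (hr1 i0))
  have hpr : p i0 = r i0 ^ αm := by
    rw [← hi0, Real.rpow_def_of_pos (hr0 i0), mul_comm, div_mul_cancel₀ _ hlogr,
      Real.exp_log (hp0 i0)]
  have hterm : p i0 ^ q * r i0 ^ (-αm * q) = 1 := by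
    rw [hpr, ← Real.rpow_mul (le_of_lt (hr0 i0)), ← Real.rpow_add (hr0 i0)]
    have hz : αm * q + -αm * q = 0 := by ring
    rw [hz, Real.rpow_zero]
  calc (1:ℝ) = p i0 ^ q * r i0 ^ (-αm * q) := hterm.symm
    _ ≤ ∑ i, p i ^ q * r i ^ (-αm * q) := by
        apply Finset.single_le_sum (f := fun i => p i ^ q * r i ^ (-αm * q))
          (fun i _ => mul_nonneg (Real.rpow_nonneg (le_of_lt (hp0 i)) q)
            (Real.rpow_nonneg (le_of_lt (hr0 i)) _)) (Finset.mem_univ i0)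

lemma div_nonneg_of_np_np {a b : ℝ} (ha : a ≤ 0) (hb : b ≤ 0) : 0 ≤ a / b := by
  have h := div_nonneg (neg_nonneg.mpr ha) (neg_nonneg.mpr hb)
  rwa [neg_div_neg_eq] at h

lemma beta_le_affine (hN : 1 ≤ N) (hr0 : ∀ i, 0 < r i) (hr1 : ∀ i, r i < 1)
    (hp0 : ∀ i, 0 < p i) (hp1 : ∀ i, p i ≤ 1)
    (hβ : ∀ q, ∑ i, p i ^ q * r i ^ β q = 1) {αm C0 : ℝ}
    (hαm : ∀ i, αm ≤ Real.log (p i) / Real.log (r i))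
    (hC0 : ∀ i, Real.log N / (-Real.log (r i)) ≤ C0)
    {q : ℝ} (hq : 0 ≤ q) : β q ≤ C0 - αm * q := by
  have hune : (Finset.univ : Finset (Fin N)).Nonempty := by
    rw [Finset.univ_nonempty_iff]
    exact Fin.pos_iff_nonempty.mp (by omega)
  have hNpos : (0:ℝ) < N := by exact_mod_cast by omega
  have hex : ∃ i, (1:ℝ)/N ≤ p i ^ q * r i ^ β q := by
    by_contra hc
    push_neg at hc
    have hlt : ∑ i, p i ^ q * r i ^ β q < ∑ _i : Fin N, (1:ℝ)/N :=
      Finset.sum_lt_sum_of_nonempty hune (fun i _ => hc i)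
    rw [hβ q, Finset.sum_const, Finset.card_univ, Fintype.card_fin, nsmul_eq_mul] at hlt
    rw [mul_one_div, div_self (ne_of_gt hNpos)] at hlt
    linarith
  obtain ⟨i, hi⟩ := hex
  have hlogri : Real.log (r i) < 0 := Real.log_neg (hr0 i) (hr1 i)
  have hlog : -Real.log N ≤ q * Real.log (p i) + β q * Real.log (r i) := by
    have h1 : Real.log (1/(N:ℝ)) ≤ Real.log (p i ^ q * r i ^ β q) :=
      Real.log_le_log (by positivity) hi
    rw [one_div, Real.log_inv] at h1
    rw [Real.log_mul (ne_of_gt (Real.rpow_pos_of_pos (hp0 i) q))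
      (ne_of_gt (Real.rpow_pos_of_pos (hr0 i) (β q))),
      Real.log_rpow (hp0 i), Real.log_rpow (hr0 i)] at h1
    exact h1
  have h2 : β q ≤ (Real.log N + q * Real.log (p i)) / (-Real.log (r i)) := by
    rw [le_div_iff₀ (by linarith)]
    have h3 : β q * -Real.log (r i) = -(β q * Real.log (r i)) := by ring
    rw [h3]
    linarith
  have h5 : q * Real.log (p i) / (-Real.log (r i)) ≤ -αm * q := by
    have heq : q * Real.log (p i) / (-Real.log (r i))
        = q * -(Real.log (p i) / Real.log (r i)) := by
      field_simp
    rw [heq]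
    calc q * -(Real.log (p i) / Real.log (r i)) ≤ q * -αm :=
          mul_le_mul_of_nonneg_left (neg_le_neg (hαm i)) hq
      _ = -αm * q := by ring
  calc β q ≤ (Real.log N + q * Real.log (p i)) / (-Real.log (r i)) := h2
    _ = Real.log N / (-Real.log (r i)) + q * Real.log (p i) / (-Real.log (r i)) :=
        add_div _ _ _
    _ ≤ C0 + -αm * q := add_le_add (hC0 i) h5
    _ = C0 - αm * q := by ring

end Beta


section Packing

variable {X : Type*} [MetricSpace X]

lemma prePacking_anti {s s' : ℝ} (h : s ≤ s') (A : Set X) :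
    prePackingMeasure s' A ≤ prePackingMeasure s A := by
  rw [prePackingMeasure, prePackingMeasure]
  refine le_iInf fun δ => le_iInf fun hδ => ?_
  refine le_trans (iInf₂_le (min δ 1) (lt_min hδ one_pos)) ?_
  refine iSup₂_le fun c ρ => iSup_le fun h1 => iSup_le fun h2 => iSup_le fun h3 => ?_
  have h2' : ∀ n, 0 < ρ n ∧ 2 * ρ n ≤ δ :=
    fun n => ⟨(h2 n).1, le_trans (h2 n).2 (min_le_left _ _)⟩
  refine le_trans ?_ (le_iSup_of_le c (le_iSup_of_le ρ (le_iSup_of_le h1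
    (le_iSup_of_le h2' (le_iSup_of_le h3 (le_refl _))))))
  apply ENNReal.tsum_le_tsum
  intro n
  apply ENNReal.rpow_le_rpow_of_exponent_ge ?_ h
  rw [← ENNReal.ofReal_one]
  apply ENNReal.ofReal_le_ofReal
  exact le_trans (h2 n).2 (min_le_right _ _)

lemma packing_anti {s s' : ℝ} (h : s ≤ s') (A : Set X) :
    packingMeasure s' A ≤ packingMeasure s A := by
  rw [packingMeasure, packingMeasure]
  refine le_iInf fun f => le_iInf fun hf => ?_
  refine le_trans (iInf₂_le f hf) ?_
  exact ENNReal.tsum_le_tsum fun n => prePacking_anti h (f n)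

lemma prePacking_zero_of_bound {s : ℝ} {A : Set X} {C : ℝ≥0∞} {ε δ1 : ℝ}
    (hC : C ≠ ⊤) (hε : 0 < ε) (hδ1 : 0 < δ1)
    (hbound : ∀ δ, 0 < δ → δ ≤ δ1 → ∀ (c : ℕ → X) (ρ : ℕ → ℝ), (∀ n, c n ∈ A) →
        (∀ n, 0 < ρ n ∧ 2 * ρ n ≤ δ) →
        (Pairwise fun m n => Disjoint (closedBall (c m) (ρ m)) (closedBall (c n) (ρ n))) →
        ∑' n, ENNReal.ofReal (2 * ρ n) ^ s ≤ C * ENNReal.ofReal δ ^ ε) :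
    prePackingMeasure s A = 0 := by
  refine le_antisymm ?_ (zero_le)
  have hle : ∀ k : ℕ, prePackingMeasure s A ≤ C * ENNReal.ofReal (δ1 * (1/2)^k) ^ ε := by
    intro k
    have hδk : 0 < δ1 * (1/2:ℝ)^k := by positivity
    have hδk1 : δ1 * (1/2:ℝ)^k ≤ δ1 := by
      nlinarith [pow_le_one₀ (by norm_num : (0:ℝ) ≤ 1/2) (by norm_num : (1/2:ℝ) ≤ 1) (n := k)]
    refine le_trans (iInf₂_le _ hδk) ?_
    refine iSup₂_le fun c ρ => iSup_le fun h1 => iSup_le fun h2 => iSup_le fun h3 => ?_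
    exact hbound _ hδk hδk1 c ρ h1 h2 h3
  have heq : ∀ k : ℕ, C * ENNReal.ofReal (δ1 * (1/2)^k) ^ ε
      = (C * ENNReal.ofReal δ1 ^ ε) * (ENNReal.ofReal ((1/2:ℝ)^ε)) ^ k := by
    intro k
    rw [ENNReal.ofReal_mul (le_of_lt hδ1)]
    rw [ENNReal.mul_rpow_of_nonneg _ _ (le_of_lt hε)]
    rw [mul_assoc]
    congr 1
    have hL : ENNReal.ofReal ((1/2:ℝ)^k) ^ ε = ENNReal.ofReal (1/2:ℝ) ^ ((k:ℝ) * ε) := by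
      rw [ENNReal.ofReal_pow (by norm_num : (0:ℝ) ≤ 1/2),
        ← ENNReal.rpow_natCast (ENNReal.ofReal (1/2:ℝ)) k, ← ENNReal.rpow_mul]
    have hR : ENNReal.ofReal ((1/2:ℝ)^ε) ^ k = ENNReal.ofReal (1/2:ℝ) ^ ((k:ℝ) * ε) := by
      rw [← ENNReal.ofReal_rpow_of_pos (by norm_num : (0:ℝ) < 1/2),
        ← ENNReal.rpow_natCast (ENNReal.ofReal (1/2:ℝ) ^ ε) k, ← ENNReal.rpow_mul,
        mul_comm ε ((k:ℝ))]
    rw [hL, hR]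
  have hb1 : ENNReal.ofReal ((1/2:ℝ)^ε) < 1 := by
    rw [← ENNReal.ofReal_one]
    apply ENNReal.ofReal_lt_ofReal_iff_of_nonneg (Real.rpow_nonneg (by norm_num) ε) |>.mpr
    apply Real.rpow_lt_one (by norm_num) (by norm_num) hε
  have htend : Filter.Tendsto (fun k : ℕ => C * ENNReal.ofReal (δ1 * (1/2)^k) ^ ε)
      Filter.atTop (nhds 0) := by
    rw [tendsto_congr heq]
    have h1 := ENNReal.tendsto_pow_atTop_nhds_zero_of_lt_one hb1
    have h2 := ENNReal.Tendsto.const_mul (a := C * ENNReal.ofReal δ1 ^ ε) h1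
      (Or.inr (ENNReal.mul_ne_top hC (ENNReal.rpow_ne_top_of_nonneg (le_of_lt hε) ENNReal.ofReal_ne_top)))
    rw [mul_zero] at h2
    exact h2
  exact ge_of_tendsto htend (Filter.Eventually.of_forall hle)

lemma packing_le_cover {s : ℝ} {A : Set X} (f : ℕ → Set X) (hf : A ⊆ ⋃ n, f n) :
    packingMeasure s A ≤ ∑' n, prePackingMeasure s (f n) :=
  iInf₂_le f hf

end Packing


section LowerBound

variable {S : Fin N → EuclideanSpace ℝ (Fin d) → EuclideanSpace ℝ (Fin d)} {r p : Fin N → ℝ}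
variable {μ : Measure (EuclideanSpace ℝ (Fin d))} {K : Set (EuclideanSpace ℝ (Fin d))}

lemma wprod_nonneg {a : Fin N → ℝ} (h0 : ∀ i, 0 ≤ a i) (w : List (Fin N)) :
    0 ≤ wprod a w := by
  induction w with
  | nil => norm_num
  | cons i w ih => rw [wprod_cons]; exact mul_nonneg (h0 i) ih

lemma wprod_mono {a b : Fin N → ℝ} (h0 : ∀ i, 0 ≤ a i) (h : ∀ i, a i ≤ b i)
    (w : List (Fin N)) : wprod a w ≤ wprod b w := by
  induction w with
  | nil => simp
  | cons i w ih =>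
    rw [wprod_cons, wprod_cons]
    exact mul_le_mul (h i) ih (wprod_nonneg h0 w) (le_trans (h0 i) (h i))

lemma word_at_scale {rmin rmax : ℝ} (hK : K = ⋃ i, S i '' K)
    (hr0 : ∀ i, 0 < r i) (hrmin_le : ∀ i, rmin ≤ r i) (hrmin_pos : 0 < rmin)
    (hle_rmax : ∀ i, r i ≤ rmax) :
    ∀ n : ℕ, ∀ ρ' : ℝ, 0 < ρ' → ρ' < 1 → rmax ^ n ≤ ρ' → ∀ x ∈ K,
      ∃ w : List (Fin N), x ∈ wmap S w '' K ∧ wprod r w ≤ ρ' ∧ ρ' * rmin ≤ wprod r w := by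
  intro n
  induction n with
  | zero =>
    intro ρ' h0 h1 hle x hx
    simp only [pow_zero] at hle
    linarith
  | succ n ih =>
    intro ρ' h0 h1 hle x hx
    have hx' : x ∈ ⋃ i, S i '' K := hK ▸ hx
    obtain ⟨i, y, hy, hyx⟩ := by simpa using hx'
    by_cases hc : r i ≤ ρ'
    · refine ⟨[i], ⟨y, hy, ?_⟩, ?_, ?_⟩
      · simpa [wmap] using hyx
      · simpa [wprod] using hc
      · have h2 := hrmin_le i
        simp only [wprod_cons, wprod_nil, mul_one]
        nlinarith
    · push_neg at hc
      have hripos := hr0 i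
      have hrmaxpos : 0 < rmax := lt_of_lt_of_le hripos (hle_rmax i)
      have hd0 : 0 < ρ' / r i := div_pos h0 hripos
      have hd1 : ρ' / r i < 1 := (div_lt_one hripos).mpr hc
      have hstep : rmax ^ n ≤ ρ' / r i := by
        have h3 : rmax ^ n ≤ ρ' / rmax := by
          rw [le_div_iff₀ hrmaxpos]
          calc rmax ^ n * rmax = rmax ^ (n+1) := by ring
            _ ≤ ρ' := hle
        calc rmax ^ n ≤ ρ' / rmax := h3
          _ ≤ ρ' / r i :=
              div_le_div_of_nonneg_left (le_of_lt h0) hripos (hle_rmax i)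
      obtain ⟨w, ⟨z, hzK, hzw⟩, hwle, hwge⟩ := ih (ρ' / r i) hd0 hd1 hstep y hy
      refine ⟨i :: w, ⟨z, hzK, ?_⟩, ?_, ?_⟩
      · rw [wmap_cons]
        show S i (wmap S w z) = x
        rw [hzw, hyx]
      · rw [wprod_cons]
        calc r i * wprod r w ≤ r i * (ρ' / r i) :=
              mul_le_mul_of_nonneg_left hwle (le_of_lt hripos)
          _ = ρ' := by field_simp
      · rw [wprod_cons]
        calc ρ' * rmin = r i * (ρ' / r i * rmin) := by field_simp
          _ ≤ r i * wprod r w := mul_le_mul_of_nonneg_left hwge (le_of_lt hripos)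

lemma mu_ball_lower [IsProbabilityMeasure μ] {rmin rmax T : ℝ} (hN : 1 ≤ N)
    (hS : ∀ i x y, dist (S i x) (S i y) = r i * dist x y)
    (hr0 : ∀ i, 0 < r i) (hrmin_le : ∀ i, rmin ≤ r i) (hrmin_pos : 0 < rmin)
    (hle_rmax : ∀ i, r i ≤ rmax) (hrmax1 : rmax < 1)
    (hp0 : ∀ i, 0 < p i)
    (hμ' : ∀ B, MeasurableSet B → μ B = ∑ i, ENNReal.ofReal (p i) * μ (S i ⁻¹' B))
    (hμK : μ K = 1) (hK : K = ⋃ i, S i '' K) (hKc : IsCompact K)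
    (hT : ∀ i, r i ^ T ≤ p i) (hT0 : 0 ≤ T) :
    ∀ x ∈ K, ∀ ρ : ℝ, 0 < ρ → ρ < 1 →
      ENNReal.ofReal ((rmin * (ρ / (Metric.diam K + 1))) ^ T) ≤ μ (ball x ρ) := by
  intro x hx ρ hρ0 hρ1
  have hDK0 : 0 ≤ Metric.diam K := Metric.diam_nonneg
  set DK1 := Metric.diam K + 1 with hDK1
  have hDK1pos : 0 < DK1 := by rw [hDK1]; linarith
  have hDK1ge : 1 ≤ DK1 := by rw [hDK1]; linarith
  set ρ' := ρ / DK1 with hρ'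
  have hρ'0 : 0 < ρ' := div_pos hρ0 hDK1pos
  have hρ'1 : ρ' < 1 := by
    rw [hρ', div_lt_one hDK1pos]
    linarith
  have hNe : Nonempty (Fin N) := Fin.pos_iff_nonempty.mp (by omega)
  have hrmaxpos : 0 < rmax :=
    lt_of_lt_of_le (hr0 (Classical.arbitrary _)) (hle_rmax _)
  obtain ⟨n, hn⟩ := exists_pow_lt_of_lt_one hρ'0 hrmax1
  obtain ⟨w, ⟨z, hzK, hzw⟩, hwle, hwge⟩ := word_at_scale hK hr0 hrmin_le hrmin_pos hle_rmax
    n ρ' hρ'0 hρ'1 (le_of_lt hn) x hx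
  have hsub : wmap S w '' K ⊆ ball x ρ := by
    rintro y' ⟨z', hz'K, rfl⟩
    rw [mem_ball, ← hzw, dist_wmap hS w z' z]
    have h1 : dist z' z ≤ Metric.diam K := Metric.dist_le_diam_of_mem hKc.isBounded hz'K hzK
    have h2 : wprod r w * dist z' z ≤ ρ' * Metric.diam K :=
      mul_le_mul hwle h1 dist_nonneg (le_of_lt hρ'0)
    have h3 : ρ' * Metric.diam K < ρ' * DK1 := by
      apply mul_lt_mul_of_pos_left ?_ hρ'0
      rw [hDK1]; linarith
    have h4 : ρ' * DK1 = ρ := by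
      rw [hρ']; field_simp
    linarith
  have hwmeas : MeasurableSet (wmap S w '' K) :=
    (hKc.image (continuous_wmap hS hr0 w)).measurableSet
  have h1 : ENNReal.ofReal (wprod p w) ≤ μ (wmap S w '' K) := by
    have h2 := word_lower hp0 hμ' hS hr0 w (wmap S w '' K) hwmeas
    have h3 : K ⊆ wmap S w ⁻¹' (wmap S w '' K) := Set.subset_preimage_image _ _
    calc ENNReal.ofReal (wprod p w) = ENNReal.ofReal (wprod p w) * μ K := by
          rw [hμK, mul_one]
      _ ≤ ENNReal.ofReal (wprod p w) * μ (wmap S w ⁻¹' (wmap S w '' K)) :=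
          mul_le_mul_right (measure_mono h3) _
      _ ≤ μ (wmap S w '' K) := h2
  have h4 : (rmin * ρ') ^ T ≤ wprod p w := by
    calc (rmin * ρ') ^ T ≤ (wprod r w) ^ T := by
          apply Real.rpow_le_rpow (by positivity) ?_ hT0
          calc rmin * ρ' = ρ' * rmin := mul_comm _ _
            _ ≤ wprod r w := hwge
      _ = wprod (fun i => r i ^ T) w := (wprod_rpow hr0 T w).symm
      _ ≤ wprod p w := wprod_mono (fun i => Real.rpow_nonneg (le_of_lt (hr0 i)) T) hT w
  calc ENNReal.ofReal ((rmin * (ρ / DK1)) ^ T) ≤ ENNReal.ofReal (wprod p w) :=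
        ENNReal.ofReal_le_ofReal h4
    _ ≤ μ (wmap S w '' K) := h1
    _ ≤ μ (ball x ρ) := measure_mono hsub

end LowerBound

end MFAux

set_option maxHeartbeats 1000000 in
open MFAux in
theorem dimP_upper_level_set_le (N d : ℕ) (hN : 1 ≤ N)
    (S : Fin N → EuclideanSpace ℝ (Fin d) → EuclideanSpace ℝ (Fin d))
    (r p : Fin N → ℝ) (hr : ∀ i, r i ∈ Set.Ioo (0:ℝ) 1)
    (hS : ∀ i x y, dist (S i x) (S i y) = r i * dist x y)
    (hp : ∀ i, 0 < p i) (hpsum : ∑ i, p i = 1)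
    (K : Set (EuclideanSpace ℝ (Fin d))) (hKne : K.Nonempty) (hKc : IsCompact K)
    (hK : K = ⋃ i, S i '' K)
    (μ : Measure (EuclideanSpace ℝ (Fin d))) [IsProbabilityMeasure μ]
    (hμ : μ = ∑ i, ENNReal.ofReal (p i) • μ.map (S i))
    -- open set condition
    (U : Set (EuclideanSpace ℝ (Fin d))) (hUo : IsOpen U) (hUne : U.Nonempty)
    (hUb : Bornology.IsBounded U) (hUsub : ∀ i, S i '' U ⊆ U)
    (hUdisj : Pairwise fun i j : Fin N => Disjoint (S i '' U) (S j '' U))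
    (β : ℝ → ℝ) (hβ : ∀ q, ∑ i, p i ^ q * r i ^ β q = 1)
    (β'0 : ℝ) (hβ' : HasDerivAt β β'0 0)
    (α : ℝ) (hα : α ≤ -β'0) :
    dimP {x ∈ K |
        Filter.limsup (fun ρ => Real.log (μ (ball x ρ)).toReal / Real.log ρ)
          (𝓝[>] (0:ℝ)) ≤ α} ≤
      sInf (Set.range fun q : ℝ => α * q + β q) := by
  classical
  have hr0 : ∀ i, 0 < r i := fun i => (hr i).1
  have hr1 : ∀ i, r i < 1 := fun i => (hr i).2
  have hp1 : ∀ i, p i ≤ 1 := by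
    intro i
    rw [← hpsum]
    exact Finset.single_le_sum (fun j _ => le_of_lt (hp j)) (Finset.mem_univ i)
  have hSc : ∀ i, Continuous (S i) := by
    intro i
    refine (LipschitzWith.of_dist_le_mul (K := (r i).toNNReal) (f := S i) ?_).continuous
    intro x y
    rw [hS i x y, Real.coe_toNNReal _ (le_of_lt (hr0 i))]
  have hμ' := MFAux.apply_sum hμ hSc
  have hNe : Nonempty (Fin N) := Fin.pos_iff_nonempty.mp (by omega)
  have hune : (Finset.univ : Finset (Fin N)).Nonempty := Finset.univ_nonempty
  set rmin := Finset.univ.inf' hune r with hrmin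
  set rmax := Finset.univ.sup' hune r with hrmaxdef
  have hrmin_le : ∀ i, rmin ≤ r i := fun i => Finset.inf'_le r (Finset.mem_univ i)
  have hle_rmax : ∀ i, r i ≤ rmax := fun i => Finset.le_sup' r (Finset.mem_univ i)
  have hrmin_pos : 0 < rmin := by
    obtain ⟨i, _, hi⟩ := Finset.exists_mem_eq_inf' hune r
    rw [hrmin, hi]; exact hr0 i
  have hrmin_lt1 : rmin < 1 := by
    obtain ⟨i, _, hi⟩ := Finset.exists_mem_eq_inf' hune r
    rw [hrmin, hi]; exact hr1 i
  have hrmax_pos : 0 < rmax := by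
    obtain ⟨i, _, hi⟩ := Finset.exists_mem_eq_sup' hune r
    rw [hrmaxdef, hi]; exact hr0 i
  have hrmax_lt1 : rmax < 1 := by
    obtain ⟨i, _, hi⟩ := Finset.exists_mem_eq_sup' hune r
    rw [hrmaxdef, hi]; exact hr1 i
  have hμK : μ K = 1 := mu_K_eq_one hp hμ' hS hr0 hle_rmax (le_of_lt hrmax_pos) hrmax_lt1
    hK hKne hKc
  -- the exponent for the lower bound on ball measures
  set T := Finset.univ.sup' hune (fun i => Real.log (p i) / Real.log (r i)) with hTdef
  have hlogr_neg : ∀ i, Real.log (r i) < 0 := fun i => Real.log_neg (hr0 i) (hr1 i)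
  have hlogp_nonpos : ∀ i, Real.log (p i) ≤ 0 := fun i => Real.log_nonpos (le_of_lt (hp i)) (hp1 i)
  have hT0 : 0 ≤ T := by
    obtain ⟨i, _, hi⟩ := Finset.exists_mem_eq_sup' hune (fun i => Real.log (p i) / Real.log (r i))
    rw [hTdef, hi]
    exact MFAux.div_nonneg_of_np_np (hlogp_nonpos i) (le_of_lt (hlogr_neg i))
  have hTle : ∀ i, r i ^ T ≤ p i := by
    intro i
    have h1 : Real.log (p i) / Real.log (r i) ≤ T :=
      hTdef ▸ Finset.le_sup' (fun i => Real.log (p i) / Real.log (r i)) (Finset.mem_univ i)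
    have h2 : T * Real.log (r i) ≤ Real.log (p i) := by
      have h3 := mul_le_mul_of_nonpos_right h1 (le_of_lt (hlogr_neg i))
      rw [div_mul_cancel₀ _ (ne_of_lt (hlogr_neg i))] at h3
      linarith [h3]
    calc r i ^ T = Real.exp (T * Real.log (r i)) := by
          rw [Real.rpow_def_of_pos (hr0 i), mul_comm]
      _ ≤ Real.exp (Real.log (p i)) := Real.exp_le_exp.mpr h2
      _ = p i := Real.exp_log (hp i)
  have hlow := mu_ball_lower (μ := μ) (K := K) hN hS hr0 hrmin_le hrmin_pos hle_rmax hrmax_lt1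
    hp hμ' hμK hK hKc hTle hT0
  set Ξ : Set (EuclideanSpace ℝ (Fin d)) := {x ∈ K |
      Filter.limsup (fun ρ => Real.log (μ (ball x ρ)).toReal / Real.log ρ)
        (𝓝[>] (0:ℝ)) ≤ α} with hΞ
  -- MAIN vanishing statement
  have MAIN : ∀ q : ℝ, 0 ≤ q → ∀ s : ℝ, α * q + β q < s → packingMeasure s Ξ = 0 := by
    intro q hq s hs
    set ε := (s - (α * q + β q)) / (q + 3) with hεdef
    have hε : 0 < ε := by
      rw [hεdef]
      apply div_pos (by linarith) (by linarith)
    set s0 := (α + ε) * q + (β q + ε) + ε with hs0def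
    have hs0s : s0 ≤ s := by
      rw [hs0def, hεdef]
      have h1 : (s - (α * q + β q)) / (q + 3) * (q + 2) ≤ (s - (α * q + β q)) := by
        rw [div_mul_eq_mul_div, div_le_iff₀ (by linarith : (0:ℝ) < q + 3)]
        nlinarith
      nlinarith [hε]
    have hcore : packingMeasure s0 Ξ = 0 := by
      -- moment bound at exponent β q + ε
      have hθ : ∑ i, p i ^ q * r i ^ (β q + ε) < 1 := by
        have := sum_exponent_strict_anti hN hr0 hr1 hp (q := q)
          (lt_add_of_pos_right (β q) hε)
        rw [hβ q] at this
        exact this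
      obtain ⟨CM, hCMne, hCM⟩ := moment_bound hN hS hr0 hr1 hp hμ' hμK hK hKc hKne
        hUo hUne hUsub hUdisj q (β q + ε) hq hθ
      -- the cover
      set Em : ℕ → Set (EuclideanSpace ℝ (Fin d)) := fun m => {x ∈ K |
        ∀ ρ : ℝ, 0 < ρ → ρ < 1/((m:ℝ)+1) → ENNReal.ofReal (ρ ^ (α+ε)) ≤ μ (ball x ρ)} with hEm
      have hDK1pos : (0:ℝ) < Metric.diam K + 1 := by
        linarith [Metric.diam_nonneg (s := K)]
      have hcover : Ξ ⊆ ⋃ m, Em m := by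
        intro x hx
        obtain ⟨hxK, hlim⟩ := hx
        set c0 := rmin / (Metric.diam K + 1) with hc0def
        have hc0pos : 0 < c0 := div_pos hrmin_pos hDK1pos
        have hc0lt1 : c0 < 1 := by
          rw [hc0def, div_lt_one hDK1pos]
          linarith [Metric.diam_nonneg (s := K), hrmin_lt1]
        have hlogc0 : Real.log c0 < 0 := Real.log_neg hc0pos hc0lt1
        have hbound : ∀ ρ : ℝ, 0 < ρ → ρ < c0 →
            Real.log (μ (ball x ρ)).toReal / Real.log ρ ≤ 2 * T := by
          intro ρ hρ0 hρc
          have hρ1 : ρ < 1 := lt_trans hρc hc0lt1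
          have hlogρ : Real.log ρ < 0 := Real.log_neg hρ0 hρ1
          have hlow1 := hlow x hxK ρ hρ0 hρ1
          have hrw : rmin * (ρ / (Metric.diam K + 1)) = c0 * ρ := by
            rw [hc0def]; ring
          rw [hrw] at hlow1
          have hc0ρpos : 0 < c0 * ρ := mul_pos hc0pos hρ0
          set tt := (μ (ball x ρ)).toReal with htt
          have httge : (c0 * ρ) ^ T ≤ tt :=
            (ENNReal.ofReal_le_iff_le_toReal (measure_ne_top μ _)).mp hlow1
          have httpos : 0 < tt := lt_of_lt_of_le (Real.rpow_pos_of_pos hc0ρpos T) httge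
          have hlogt : T * (Real.log c0 + Real.log ρ) ≤ Real.log tt := by
            calc T * (Real.log c0 + Real.log ρ) = Real.log ((c0*ρ)^T) := by
                  rw [Real.log_rpow hc0ρpos, Real.log_mul (ne_of_gt hc0pos) (ne_of_gt hρ0)]
              _ ≤ Real.log tt := Real.log_le_log (Real.rpow_pos_of_pos hc0ρpos T) httge
          have hdiv : Real.log tt / Real.log ρ
              ≤ T * (Real.log c0 + Real.log ρ) / Real.log ρ := by
            have h9 : 0 ≤ (T * (Real.log c0 + Real.log ρ) - Real.log tt) / Real.log ρ :=
              MFAux.div_nonneg_of_np_np (by linarith) (le_of_lt hlogρ)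
            rw [sub_div] at h9
            linarith
          have h11 : T * (Real.log c0 + Real.log ρ) / Real.log ρ
              = T * (Real.log c0 / Real.log ρ) + T := by
            field_simp [ne_of_lt hlogρ]
          have h12 : Real.log c0 / Real.log ρ ≤ 1 := by
            have h13 : 0 ≤ (Real.log ρ - Real.log c0) / Real.log ρ :=
              MFAux.div_nonneg_of_np_np
                (by linarith [Real.log_lt_log hρ0 hρc]) (le_of_lt hlogρ)
            rw [sub_div, div_self (ne_of_lt hlogρ)] at h13
            linarith
          calc Real.log tt / Real.log ρ ≤ T * (Real.log c0 / Real.log ρ) + T := by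
                rw [← h11]; exact hdiv
            _ ≤ T * 1 + T := add_le_add_left (mul_le_mul_of_nonneg_left h12 hT0) T
            _ = 2 * T := by ring
        have hbdd : Filter.IsBoundedUnder (· ≤ ·) (𝓝[>] (0:ℝ))
            (fun ρ => Real.log (μ (ball x ρ)).toReal / Real.log ρ) := by
          refine ⟨2*T, ?_⟩
          rw [Filter.eventually_map]
          filter_upwards [Ioo_mem_nhdsGT_of_mem
            (Set.mem_Ico.mpr ⟨le_refl (0:ℝ), hc0pos⟩)] with ρ hρ
          exact hbound ρ hρ.1 hρ.2
        have hev := Filter.eventually_lt_of_limsup_lt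
          (lt_of_le_of_lt hlim (lt_add_of_pos_right α hε)) hbdd
        rw [Filter.eventually_iff, mem_nhdsGT_iff_exists_Ioo_subset] at hev
        obtain ⟨u, hu, huss⟩ := hev
        rw [Set.mem_Ioi] at hu
        obtain ⟨m, hm⟩ := exists_nat_one_div_lt (lt_min hu one_pos)
        refine Set.mem_iUnion.mpr ⟨m, hxK, ?_⟩
        intro ρ hρ0 hρm
        have hρu : ρ < u := lt_of_lt_of_le (lt_trans hρm (lt_of_lt_of_le hm (min_le_left u 1))) le_rfl
        have hρ1 : ρ < 1 := lt_of_lt_of_le (lt_trans hρm (lt_of_lt_of_le hm (min_le_right u 1))) le_rfl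
        have hfρ : Real.log (μ (ball x ρ)).toReal / Real.log ρ < α + ε :=
          huss (Set.mem_Ioo.mpr ⟨hρ0, hρu⟩)
        have hlogρ : Real.log ρ < 0 := Real.log_neg hρ0 hρ1
        set tt := (μ (ball x ρ)).toReal with htt
        have hlow1 := hlow x hxK ρ hρ0 hρ1
        have httge : (rmin * (ρ / (Metric.diam K + 1))) ^ T ≤ tt :=
          (ENNReal.ofReal_le_iff_le_toReal (measure_ne_top μ _)).mp hlow1
        have httpos : 0 < tt :=
          lt_of_lt_of_le (Real.rpow_pos_of_pos
            (mul_pos hrmin_pos (div_pos hρ0 hDK1pos)) T) httge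
        have hlogt : (α + ε) * Real.log ρ ≤ Real.log tt := by
          have h16 := mul_le_mul_of_nonpos_right (le_of_lt hfρ) (le_of_lt hlogρ)
          rw [div_mul_cancel₀ _ (ne_of_lt hlogρ)] at h16
          linarith
        have h14 : ρ ^ (α+ε) ≤ tt := by
          calc ρ^(α+ε) = Real.exp ((α+ε) * Real.log ρ) := by
                rw [Real.rpow_def_of_pos hρ0, mul_comm]
            _ ≤ Real.exp (Real.log tt) := Real.exp_le_exp.mpr hlogt
            _ = tt := Real.exp_log httpos
        calc ENNReal.ofReal (ρ^(α+ε)) ≤ ENNReal.ofReal tt := ENNReal.ofReal_le_ofReal h14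
          _ = μ (ball x ρ) := ENNReal.ofReal_toReal (measure_ne_top μ _)
      have hpre : ∀ m, prePackingMeasure s0 (Em m) = 0 := by
        intro m
        have hm1 : (0:ℝ) < 1/((m:ℝ)+1) := by positivity
        set CC2 : ℝ≥0∞ := ENNReal.ofReal 2 ^ ((α+ε)*q) * CM with hCC2
        have h2netop : (ENNReal.ofReal 2 : ℝ≥0∞) ^ ((α+ε)*q) ≠ ⊤ := by
          intro hcontra
          rw [ENNReal.rpow_eq_top_iff] at hcontra
          rcases hcontra with ⟨h1, _⟩ | ⟨h1, _⟩
          · rw [ENNReal.ofReal_eq_zero] at h1; linarith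
          · exact absurd h1 ENNReal.ofReal_ne_top
        have hCC2ne : CC2 ≠ ⊤ := ENNReal.mul_ne_top h2netop hCMne
        apply prePacking_zero_of_bound (C := CC2) hCC2ne hε hm1
        intro δ hδ0 hδ1 c ρf hcE hρf hdisj
        have hcK2 : ∀ n, c n ∈ K := fun n => (hcE n).1
        have hm2 : (1:ℝ)/((m:ℝ)+1) ≤ 1 := by
          rw [div_le_one (by positivity)]
          linarith [show (0:ℝ) ≤ (m:ℝ) from Nat.cast_nonneg m]
        have hρ01 : ∀ n, 0 < ρf n ∧ ρf n < 1 := by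
          intro n
          refine ⟨(hρf n).1, ?_⟩
          have h1 := (hρf n).2
          nlinarith [(hρf n).1]
        have hρm2 : ∀ n, ρf n < 1/((m:ℝ)+1) := by
          intro n
          have h1 := (hρf n).2
          nlinarith [(hρf n).1]
        have hterm : ∀ n, ENNReal.ofReal (2 * ρf n) ^ s0
            ≤ (ENNReal.ofReal 2 ^ ((α+ε)*q) * ENNReal.ofReal δ ^ ε)
              * (μ (ball (c n) (ρf n)) ^ q * ENNReal.ofReal (2 * ρf n) ^ (β q + ε)) := by
          intro n
          have h2ρpos : (0:ℝ) < 2 * ρf n := by linarith [(hρf n).1]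
          have hne0 : ENNReal.ofReal (2 * ρf n) ≠ 0 := (ENNReal.ofReal_pos.mpr h2ρpos).ne'
          have hnetop : ENNReal.ofReal (2 * ρf n) ≠ ⊤ := ENNReal.ofReal_ne_top
          have hsplit : ENNReal.ofReal (2*ρf n) ^ s0
              = ENNReal.ofReal (2*ρf n) ^ ((α+ε)*q) * ENNReal.ofReal (2*ρf n) ^ (β q + ε)
                * ENNReal.ofReal (2*ρf n) ^ ε := by
            rw [hs0def, ENNReal.rpow_add _ _ hne0 hnetop, ENNReal.rpow_add _ _ hne0 hnetop]
          rw [hsplit]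
          have hf1 : ENNReal.ofReal (2*ρf n) ^ ((α+ε)*q)
              ≤ ENNReal.ofReal 2 ^ ((α+ε)*q) * μ (ball (c n) (ρf n)) ^ q := by
            have he1 : ENNReal.ofReal (2*ρf n) ^ ((α+ε)*q)
                = ENNReal.ofReal 2 ^ ((α+ε)*q) * (ENNReal.ofReal (ρf n) ^ (α+ε)) ^ q := by
              rw [ENNReal.ofReal_mul (by norm_num : (0:ℝ) ≤ 2),
                ENNReal.mul_rpow_of_ne_top ENNReal.ofReal_ne_top ENNReal.ofReal_ne_top,
                ← ENNReal.rpow_mul]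
            rw [he1]
            apply mul_le_mul_right
            apply ENNReal.rpow_le_rpow ?_ hq
            rw [ENNReal.ofReal_rpow_of_pos (hρ01 n).1]
            exact (hcE n).2 (ρf n) (hρ01 n).1 (hρm2 n)
          have hf3 : ENNReal.ofReal (2*ρf n) ^ ε ≤ ENNReal.ofReal δ ^ ε :=
            ENNReal.rpow_le_rpow (ENNReal.ofReal_le_ofReal (hρf n).2) (le_of_lt hε)
          calc ENNReal.ofReal (2*ρf n) ^ ((α+ε)*q) * ENNReal.ofReal (2*ρf n) ^ (β q + ε)
                * ENNReal.ofReal (2*ρf n) ^ ε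
              ≤ (ENNReal.ofReal 2 ^ ((α+ε)*q) * μ (ball (c n) (ρf n)) ^ q)
                * ENNReal.ofReal (2*ρf n) ^ (β q + ε) * ENNReal.ofReal δ ^ ε :=
                mul_le_mul' (mul_le_mul_left hf1 _) hf3
            _ = (ENNReal.ofReal 2 ^ ((α+ε)*q) * ENNReal.ofReal δ ^ ε)
                * (μ (ball (c n) (ρf n)) ^ q * ENNReal.ofReal (2 * ρf n) ^ (β q + ε)) := by
                ring
        rw [ENNReal.tsum_eq_iSup_sum]
        apply iSup_le
        intro F
        calc ∑ n ∈ F, ENNReal.ofReal (2 * ρf n) ^ s0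
            ≤ ∑ n ∈ F, (ENNReal.ofReal 2 ^ ((α+ε)*q) * ENNReal.ofReal δ ^ ε)
              * (μ (ball (c n) (ρf n)) ^ q * ENNReal.ofReal (2 * ρf n) ^ (β q + ε)) :=
              Finset.sum_le_sum fun n _ => hterm n
          _ = (ENNReal.ofReal 2 ^ ((α+ε)*q) * ENNReal.ofReal δ ^ ε)
              * ∑ n ∈ F, μ (ball (c n) (ρf n)) ^ q * ENNReal.ofReal (2 * ρf n) ^ (β q + ε) := by
              rw [Finset.mul_sum]
          _ ≤ (ENNReal.ofReal 2 ^ ((α+ε)*q) * ENNReal.ofReal δ ^ ε) * CM :=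
              mul_le_mul_right (hCM c ρf hcK2 hρ01 hdisj F) _
          _ = CC2 * ENNReal.ofReal δ ^ ε := by
              rw [hCC2]
              ring
      refine le_antisymm ?_ (zero_le)
      calc packingMeasure s0 Ξ ≤ ∑' m, prePackingMeasure s0 (Em m) :=
            packing_le_cover Em hcover
        _ = 0 := by simp [hpre]
    refine le_antisymm ?_ (zero_le)
    calc packingMeasure s Ξ ≤ packingMeasure s0 Ξ := packing_anti hs0s Ξ
      _ = 0 := hcore
  -- dimension bounds
  have hBdd : BddBelow {s : ℝ | 0 ≤ s ∧ packingMeasure s Ξ = 0} := ⟨0, fun y hy => hy.1⟩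
  have D1 : ∀ q : ℝ, 0 ≤ q → ∀ s : ℝ, 0 ≤ s → α * q + β q < s → dimP Ξ ≤ s := by
    intro q hq s hs0 hs
    exact csInf_le hBdd ⟨hs0, MAIN q hq s hs⟩
  have D2 : ∀ q : ℝ, 0 ≤ q → dimP Ξ ≤ max (α * q + β q) 0 := by
    intro q hq
    by_contra hcon
    push_neg at hcon
    set s := (max (α * q + β q) 0 + dimP Ξ) / 2 with hsdef
    have h1 : max (α * q + β q) 0 < s := by rw [hsdef]; linarith
    have h2 : s < dimP Ξ := by rw [hsdef]; linarith
    have h3 : dimP Ξ ≤ s := D1 q hq s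
      (le_trans (le_max_right _ _) (le_of_lt h1))
      (lt_of_le_of_lt (le_max_left _ _) h1)
    linarith
  -- the extremes of the local dimensions
  set αm := Finset.univ.inf' hune (fun i => Real.log (p i) / Real.log (r i)) with hαmdef
  have hαm_le : ∀ i, αm ≤ Real.log (p i) / Real.log (r i) :=
    fun i => hαmdef ▸ Finset.inf'_le _ (Finset.mem_univ i)
  obtain ⟨i0, _, hi0⟩ := Finset.exists_mem_eq_inf' hune (fun i => Real.log (p i) / Real.log (r i))
  rcases le_or_gt αm α with hcase | hcase
  · -- α ≥ αm : the infimum is a genuine lower bound situation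
    have hg0 : ∀ q : ℝ, 0 ≤ q → 0 ≤ α * q + β q := by
      intro q hq
      have h1 : -αm * q ≤ β q :=
        beta_ge_neg_line hN hr0 hr1 hp hβ (αm := αm) (i0 := i0) hi0.symm hq
      nlinarith
    have hβ00 : 0 ≤ β 0 := by
      have := hg0 0 le_rfl
      simpa using this
    have hgle : ∀ q : ℝ, dimP Ξ ≤ α * q + β q := by
      intro q
      rcases le_or_gt 0 q with hq | hq
      · have := D2 q hq
        rwa [max_eq_left (hg0 q hq)] at this
      · have h1 : β 0 + q * β'0 ≤ β q :=
          beta_supporting (beta_convexOn hN hr0 hr1 hp hβ) hβ' hq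
        have h2 : dimP Ξ ≤ β 0 := by
          have := D2 0 le_rfl
          rw [max_eq_left (by simpa using hβ00)] at this
          simpa using this
        have h3 : 0 ≤ q * (α + β'0) := by
          have h3' := mul_nonneg (neg_nonneg.mpr (le_of_lt hq))
            (neg_nonneg.mpr (by linarith : α + β'0 ≤ 0))
          rwa [neg_mul_neg] at h3'
        have h4 : q * (α + β'0) = q * α + q * β'0 := by ring
        have h5 : q * α = α * q := mul_comm _ _
        linarith
    exact le_csInf ⟨α * 0 + β 0, ⟨0, rfl⟩⟩ (fun b ⟨q, hqb⟩ => hqb ▸ hgle q)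
  · -- α < αm : the range is unbounded below and dimP is 0
    set C0 := Finset.univ.sup' hune (fun i => Real.log N / (-Real.log (r i))) with hC0def
    have hC0 : ∀ i, Real.log N / (-Real.log (r i)) ≤ C0 :=
      fun i => hC0def ▸ Finset.le_sup' (fun i => Real.log N / (-Real.log (r i))) (Finset.mem_univ i)
    have haff : ∀ q : ℝ, 0 ≤ q → β q ≤ C0 - αm * q :=
      fun q hq => beta_le_affine hN hr0 hr1 hp hp1 hβ hαm_le hC0 hq
    have hqchoice : ∀ b : ℝ, ∃ q : ℝ, 0 ≤ q ∧ α * q + β q < b := by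
      intro b
      set q := max 0 ((C0 - b)/(αm - α) + 1) with hqdef
      have hq0 : 0 ≤ q := le_max_left _ _
      have hq1 : (C0 - b)/(αm - α) + 1 ≤ q := le_max_right _ _
      have hq2 : (C0 - b)/(αm - α) < q := by linarith
      have h3 : C0 - b < (αm - α) * q := by
        rw [div_lt_iff₀ (by linarith : (0:ℝ) < αm - α)] at hq2
        linarith [hq2]
      refine ⟨q, hq0, ?_⟩
      have h4 := haff q hq0
      nlinarith
    have hnb : ¬ BddBelow (Set.range fun q : ℝ => α * q + β q) := by
      rintro ⟨b, hb⟩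
      obtain ⟨q, hq0, hqb⟩ := hqchoice b
      exact absurd (hb ⟨q, rfl⟩) (not_le.mpr hqb)
    rw [Real.sInf_of_not_bddBelow hnb]
    by_contra hcon
    push_neg at hcon
    obtain ⟨q, hq0, hqs⟩ := hqchoice (dimP Ξ / 2)
    have h5 : dimP Ξ ≤ dimP Ξ / 2 := D1 q hq0 _ (by linarith) hqs
    linarith
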